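/- arXiv:1501.00521 — 2 statements merged into one kernel-verified Lean document; each statement's English description precedes it below -/
import Mathlib

section
/- (Theorem 3.3, two-blocks estimate) For every jump rate c and every constant C > 0, it holds that lim_{i→∞} limsup_{ε→0} limsup_{L→∞} limsup_{m→∞} sup_{σ ∈ Γ with L < |σ|_Γ ≤ ε√t_m} sup_{μ ∈ P_{m,C}} E_μ | η̄_{o,i} − η̄_{σ̄o,i} | = 0, where σ̄o denotes the image of σo in V_m. -/
open Filter Pointwise

namespace Tower

variable {Γ : Type} [Group Γ] [DecidableEq Γ]

/-- The ball of radius `n` about the identity in the Cayley graph of `(Γ, S)`, as a `Finset`: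
products of at most `n` elements of `S`. -/
def ballF (S : Finset Γ) : ℕ → Finset Γ
  | 0 => {1}
  | n + 1 => ballF S n ∪ ballF S n * S

lemma one_mem_ballF (S : Finset Γ) (n : ℕ) : (1 : Γ) ∈ ballF S n := by
  induction n with
  | zero => simp [ballF]
  | succ n ih => exact Finset.mem_union_left _ ih

/-- The word norm of `x` with respect to `S`. -/
noncomputable def wordNorm (S : Finset Γ) (x : Γ) : ℕ := sInf {n | x ∈ ballF S n}

/-- `(F i)` is a Følner sequence for `(Γ, S)`. -/
def IsFolner (S : Finset Γ) (F : ℕ → Finset Γ) : Prop :=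
  (∀ i, (F i).Nonempty) ∧
    Tendsto (fun i => (((F i * S) \ F i).card : ℝ) / (F i).card) atTop (nhds 0)

/-- `b(K)`: the largest `i` such that `F i` is contained in the ball of radius `K` about `o`. -/
noncomputable def bFol (S : Finset Γ) (F : ℕ → Finset Γ) (K : ℝ) : ℕ :=
  sSup {i | ∀ x ∈ F i, (wordNorm S x : ℝ) ≤ K}

/-- Exchange the values of a configuration at two coordinates. -/
def exch {α : Type} [DecidableEq α] (x y : α) (η : α → Bool) : α → Bool :=
  fun z => if z = x then η y else if z = y then η x else η z

/-- Exchange of values at two coordinates, on configurations restricted to a `Finset`. -/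
def exchOn {α : Type} [DecidableEq α] (A : Finset α) (x y : α)
    (ζ : {a // a ∈ A} → Bool) : {a // a ∈ A} → Bool :=
  fun z => if (z : α) = x then (if h : y ∈ A then ζ ⟨y, h⟩ else ζ z)
    else if (z : α) = y then (if h : x ∈ A then ζ ⟨x, h⟩ else ζ z) else ζ z

/-- The type of generators. -/
abbrev Gen (S : Finset Γ) : Type _ := {s : Γ // s ∈ S}

/-- A `Γ`-invariant local function bundle for vertices `f : V × Z → ℝ` on the Cayley graph
`X = (V, E)` of `(Γ, S)`, `V = Γ`, `Z = {0,1}^V`. -/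
structure LocalBundleV (S : Finset Γ) : Type _ where
  f : Γ → (Γ → Bool) → ℝ
  r : ℕ
  localized : ∀ (x : Γ) (η η' : Γ → Bool),
    (∀ z ∈ (ballF S r).image (x * ·), η z = η' z) → f x η = f x η'
  invariant : ∀ (σ x : Γ) (η : Γ → Bool), f (σ * x) (fun z => η (σ⁻¹ * z)) = f x η

/-- A jump rate: a symmetric, non-degenerate `Γ`-invariant local function bundle for edges,
an edge being encoded as a pair `(x, s) : Γ × Gen S` with origin `x` and terminus `x * s`. -/
structure JumpRate (S : Finset Γ) : Type _ where
  c : Γ → Gen S → (Γ → Bool) → ℝ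
  c₀ : ℝ
  c₀_pos : 0 < c₀
  nondeg : ∀ x s η, c₀ ≤ c x s η
  r : ℕ
  localized : ∀ (x : Γ) (s : Gen S) (η η' : Γ → Bool),
    (∀ z ∈ (ballF S r).image (x * ·) ∪ (ballF S r).image (x * (s : Γ) * ·), η z = η' z) →
      c x s η = c x s η'
  invariant : ∀ (σ x : Γ) (s : Gen S) (η : Γ → Bool),
    c (σ * x) s (fun z => η (σ⁻¹ * z)) = c x s η
  symm_rev : ∀ (x : Γ) (s : Gen S) (h : (s : Γ)⁻¹ ∈ S) (η : Γ → Bool),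
    c (x * (s : Γ)) ⟨(s : Γ)⁻¹, h⟩ η = c x s η
  symm_exch : ∀ (x : Γ) (s : Gen S) (η : Γ → Bool),
    c x s (exch x (x * (s : Γ)) η) = c x s η

/-- `ρ`-Bernoulli weight on `{0,1}`. -/
def bw (ρ : ℝ) (b : Bool) : ℝ := if b then ρ else 1 - ρ

/-- Expectation with respect to the `ρ`-Bernoulli product measure `ν_ρ` of a cylinder function
depending only on the coordinates in the finite set `A`. -/
noncomputable def expCyl (ρ : ℝ) (A : Finset Γ) (g : (Γ → Bool) → ℝ) : ℝ :=
  ∑ ζ : ({a // a ∈ A} → Bool),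
    (∏ a : {a // a ∈ A}, bw ρ (ζ a)) *
      g (fun z => if h : z ∈ A then ζ ⟨z, h⟩ else false)

/-- The global average `⟨f_o⟩(ρ) = E_{ν_ρ}[f_o]`. -/
noncomputable def globalAvg {S : Finset Γ} (f : LocalBundleV S) (ρ : ℝ) : ℝ :=
  expCyl ρ (ballF S f.r) (f.f 1)

section Quot

variable (N : Subgroup Γ)

/-- The configuration space `Z_m = {0,1}^{V_m}` over the quotient graph `X_m = Γ_m \ X`. -/
abbrev Conf (N : Subgroup Γ) : Type _ := (Γ ⧸ N) → Bool

/-- The `Γ_m`-periodic extension of a configuration on `X_m` to `X`. -/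
def liftZ (η : Conf N) : Γ → Bool := fun x => η (QuotientGroup.mk x)

/-- The function on `V_m × Z_m` induced by a local function bundle. -/
noncomputable def fQ {S : Finset Γ} (f : LocalBundleV S) (v : Γ ⧸ N) (η : Conf N) : ℝ :=
  f.f (Quotient.out v) (liftZ N η)

/-- The jump rate induced on the quotient graph, on the edge `(v, v * s)`. -/
noncomputable def cQ {S : Finset Γ} (c : JumpRate S) (v : Γ ⧸ N) (s : Gen S) (η : Conf N) : ℝ :=
  c.c (Quotient.out v) s (liftZ N η)

variable [N.Normal]

/-- `η^e` on the quotient, for the edge `e = (v, v * s)`. -/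
def exchQ [DecidableEq (Γ ⧸ N)] (v : Γ ⧸ N) (s : Γ) (η : Conf N) : Conf N :=
  exch v (v * QuotientGroup.mk s) η

/-- The graph distance on the quotient graph `X_m`. -/
noncomputable def distQ (S : Finset Γ) (v w : Γ ⧸ N) : ℕ :=
  sInf {n | ∃ x ∈ ballF S n, v * QuotientGroup.mk x = w}

/-- The diameter of the quotient graph `X_m`. -/
noncomputable def diamQ (S : Finset Γ) : ℕ :=
  sSup {k | ∃ v w : Γ ⧸ N, distQ N S v w = k}

variable [Fintype (Γ ⧸ N)] [DecidableEq (Γ ⧸ N)]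

/-- `μ` is a probability measure on the finite configuration space `Z_m`. -/
def IsProb (μ : Conf N → ℝ) : Prop := (∀ η, 0 ≤ μ η) ∧ ∑ η, μ η = 1

/-- The action of `Γ/Γ_m` on `Z_m`. -/
def actQ (σ : Γ ⧸ N) (η : Conf N) : Conf N := fun z => η (σ⁻¹ * z)

/-- `μ` is `Γ/Γ_m`-invariant. -/
def IsInvariant (μ : Conf N → ℝ) : Prop := ∀ σ η, μ (actQ N σ η) = μ η

/-- The uniform ((1/2)-Bernoulli) measure `ν_m` on `Z_m`. -/
noncomputable def nuU : Conf N → ℝ := fun _ => (Fintype.card (Conf N) : ℝ)⁻¹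

/-- The density `φ = dμ/dν_m`. -/
noncomputable def dens (μ : Conf N → ℝ) : Conf N → ℝ :=
  fun η => (Fintype.card (Conf N) : ℝ) * μ η

/-- `√φ` where `φ = dμ/dν_m`. -/
noncomputable def sqrtDens (μ : Conf N → ℝ) : Conf N → ℝ :=
  fun η => Real.sqrt (dens N μ η)

/-- Expectation with respect to a probability measure on `Z_m`. -/
noncomputable def Emeas (μ : Conf N → ℝ) (g : Conf N → ℝ) : ℝ := ∑ η, μ η * g η

/-- The generator `L_m F (η) = Σ_{e ∈ E_m} c(e,η) (F(η^e) - F(η))`. -/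
noncomputable def Lgen {S : Finset Γ} (c : JumpRate S) (F : Conf N → ℝ) (η : Conf N) : ℝ :=
  ∑ e : (Γ ⧸ N) × Gen S, cQ N c e.1 e.2 η * (F (exchQ N e.1 (e.2 : Γ) η) - F η)

/-- The Dirichlet form `I_m(μ) = -∫ √φ L_m √φ dν_m`. -/
noncomputable def ImGen {S : Finset Γ} (c : JumpRate S) (μ : Conf N → ℝ) : ℝ :=
  - ∑ η, nuU N η * (sqrtDens N μ η * Lgen N c (sqrtDens N μ) η)

/-- The Dirichlet form in sum form:
`I_m(μ) = (1/2) Σ_{e ∈ E_m} ∫ c(e,η) (π_e √φ)² dν_m`. -/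
noncomputable def ImSum {S : Finset Γ} (c : JumpRate S) (μ : Conf N → ℝ) : ℝ :=
  (1 / 2) * ∑ e : (Γ ⧸ N) × Gen S, ∑ η, nuU N η *
    (cQ N c e.1 e.2 η * (sqrtDens N μ (exchQ N e.1 (e.2 : Γ) η) - sqrtDens N μ η) ^ 2)

/-- The local average `f̄_{v,i}` on the quotient, over the Følner set `Fi`. -/
noncomputable def fbarQ {S : Finset Γ} (f : LocalBundleV S) (Fi : Finset Γ) (v : Γ ⧸ N)
    (η : Conf N) : ℝ :=
  ((Fi.card : ℝ))⁻¹ * ∑ σ ∈ Fi, fQ N f (QuotientGroup.mk σ * v) η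

/-- The local particle density `η̄_{v,i}` on the quotient, over the Følner set `Fi`. -/
noncomputable def etabarQ (Fi : Finset Γ) (v : Γ ⧸ N) (η : Conf N) : ℝ :=
  ((Fi.card : ℝ))⁻¹ * ∑ σ ∈ Fi, (if η (QuotientGroup.mk σ * v) then (1 : ℝ) else 0)

/-- The image of `E⁰ = {e ∈ E : oe = o or te = o}` in `E_m`. -/
def E0Q (S : Finset Γ) : Finset ((Γ ⧸ N) × Gen S) :=
  Finset.univ.filter fun e => e.1 = 1 ∨ e.1 * QuotientGroup.mk (e.2 : Γ) = 1

/-- The marginal `μ|_Λ` on `Z_Λ = {0,1}^A` of a measure on `Z_m` (identified with its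
`Γ_m`-periodic extension). -/
noncomputable def marg (A : Finset Γ) (μ : Conf N → ℝ) (ζ : {a // a ∈ A} → Bool) : ℝ :=
  ∑ η : Conf N, if (∀ a : {a // a ∈ A}, liftZ N η (a : Γ) = ζ a) then μ η else 0

/-- The density `φ_Λ = d(μ|_Λ)/dν_Λ`. -/
noncomputable def margDens (A : Finset Γ) (μ : Conf N → ℝ) (ζ : {a // a ∈ A} → Bool) : ℝ :=
  (Fintype.card ({a // a ∈ A} → Bool) : ℝ) * marg N A μ ζ

/-- The restricted Dirichlet form
`I°_Λ(μ) = (1/2) Σ_{e ∈ E_Λ} ∫_{Z_Λ} (π_e √φ_Λ)² dν_Λ` for the subgraph `Λ = (A, Eset)`. -/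
noncomputable def IrestV {S : Finset Γ} (A : Finset Γ) (Eset : Finset (Γ × Gen S))
    (μ : Conf N → ℝ) : ℝ :=
  (1 / 2) * ∑ e ∈ Eset, ∑ ζ : ({a // a ∈ A} → Bool),
    (Fintype.card ({a // a ∈ A} → Bool) : ℝ)⁻¹ *
      (Real.sqrt (margDens N A μ (exchOn A e.1 (e.1 * (e.2 : Γ)) ζ)) -
        Real.sqrt (margDens N A μ ζ)) ^ 2

/-- The marginal on `Z_Λ × Z_Λ` of the pushforward `σ̂μ` of `μ` under `η ↦ (η, σ⁻¹η)`. -/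
noncomputable def margTwo (σ : Γ) (A : Finset Γ) (μ : Conf N → ℝ)
    (ζ ζ' : {a // a ∈ A} → Bool) : ℝ :=
  ∑ η : Conf N,
    if ((∀ a : {a // a ∈ A}, liftZ N η (a : Γ) = ζ a) ∧
        (∀ a : {a // a ∈ A}, liftZ N η (σ * (a : Γ)) = ζ' a)) then μ η else 0

/-- The density of `(σ̂μ)|_{Λ×Λ}` with respect to `ν_Λ ⊗ ν_Λ`. -/
noncomputable def margTwoDens (σ : Γ) (A : Finset Γ) (μ : Conf N → ℝ)
    (ζ ζ' : {a // a ∈ A} → Bool) : ℝ :=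
  ((Fintype.card ({a // a ∈ A} → Bool) : ℝ)) ^ 2 * margTwo N σ A μ ζ ζ'

/-- `I^{(o,o)}_{Λ×Λ}(σ̂μ) = (1/2) ∫ (π̃_{o,o} √(d(σ̂μ)|_{Λ×Λ}/d(ν_Λ⊗ν_Λ)))² d(ν_Λ⊗ν_Λ)`. -/
noncomputable def Ioo (σ : Γ) (A : Finset Γ) (h1 : (1 : Γ) ∈ A) (μ : Conf N → ℝ) : ℝ :=
  (1 / 2) * ∑ ζ : ({a // a ∈ A} → Bool), ∑ ζ' : ({a // a ∈ A} → Bool),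
    (((Fintype.card ({a // a ∈ A} → Bool) : ℝ)) ^ 2)⁻¹ *
      (Real.sqrt (margTwoDens N σ A μ (Function.update ζ ⟨1, h1⟩ (ζ' ⟨1, h1⟩))
          (Function.update ζ' ⟨1, h1⟩ (ζ ⟨1, h1⟩))) -
        Real.sqrt (margTwoDens N σ A μ ζ ζ')) ^ 2

/-- The two-block restricted Dirichlet form `I°_{Λ×Λ}(σ̂μ)`, i.e. the Dirichlet form of
`L°_Λ ⊗ 1 + 1 ⊗ L°_Λ` of the square root of the density of `(σ̂μ)|_{Λ×Λ}`. -/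
noncomputable def ItwoRest {S : Finset Γ} (σ : Γ) (A : Finset Γ) (Eset : Finset (Γ × Gen S))
    (μ : Conf N → ℝ) : ℝ :=
  (1 / 2) * ∑ e ∈ Eset, ∑ ζ : ({a // a ∈ A} → Bool), ∑ ζ' : ({a // a ∈ A} → Bool),
    (((Fintype.card ({a // a ∈ A} → Bool) : ℝ)) ^ 2)⁻¹ *
      ((Real.sqrt (margTwoDens N σ A μ (exchOn A e.1 (e.1 * (e.2 : Γ)) ζ) ζ') -
          Real.sqrt (margTwoDens N σ A μ ζ ζ')) ^ 2 +
        (Real.sqrt (margTwoDens N σ A μ ζ (exchOn A e.1 (e.1 * (e.2 : Γ)) ζ')) -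
          Real.sqrt (margTwoDens N σ A μ ζ ζ')) ^ 2)

end Quot

/-- The edge set `E_Λ` of the subgraph `Λ` spanned by the ball of radius `K`. -/
def ELam (S : Finset Γ) (K : ℕ) : Finset (Γ × Gen S) :=
  (ballF S K ×ˢ (Finset.univ : Finset (Gen S))).filter fun e => e.1 * (e.2 : Γ) ∈ ballF S K

section S1
variable {Γ : Type} [Group Γ] [DecidableEq Γ] {S : Finset Γ}

lemma ballF_subset_succ (S : Finset Γ) (n : ℕ) : ballF S n ⊆ ballF S (n+1) :=
  Finset.subset_union_left

lemma ballF_mono (S : Finset Γ) : ∀ {m n : ℕ}, m ≤ n → ballF S m ⊆ ballF S n := by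
  intro m n h
  induction n with
  | zero => interval_cases m; exact subset_rfl
  | succ n ih =>
    rcases Nat.lt_or_ge m (n+1) with h' | h'
    · exact (ih (Nat.lt_succ_iff.mp h')).trans (ballF_subset_succ S n)
    · have : m = n+1 := le_antisymm h h'
      subst this; exact subset_rfl

lemma mul_mem_ballF {x s : Γ} {n : ℕ} (hx : x ∈ ballF S n) (hs : s ∈ S) :
    x * s ∈ ballF S (n+1) :=
  Finset.mem_union_right _ (Finset.mul_mem_mul hx hs)

lemma smul_mem_ballF {s : Γ} (hs : s ∈ S) :
    ∀ {n : ℕ} {x : Γ}, x ∈ ballF S n → s * x ∈ ballF S (n+1) := by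
  intro n
  induction n with
  | zero =>
    intro x hx
    simp only [ballF, Finset.mem_singleton] at hx
    subst hx
    have : (1:Γ) * s ∈ ballF S 0 * S := Finset.mul_mem_mul (by simp [ballF]) hs
    simpa [ballF] using Finset.mem_union_right (ballF S 0) this
  | succ n ih =>
    intro x hx
    rcases Finset.mem_union.mp hx with h | h
    · exact ballF_subset_succ S (n+1) (ih h)
    · rcases Finset.mem_mul.mp h with ⟨y, hy, u, hu, rfl⟩
      have := mul_mem_ballF (ih hy) hu
      simpa [mul_assoc] using this

lemma inv_mem_ballF (hS : ∀ s ∈ S, s⁻¹ ∈ S) :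
    ∀ {n : ℕ} {x : Γ}, x ∈ ballF S n → x⁻¹ ∈ ballF S n := by
  intro n
  induction n with
  | zero => intro x hx; simp only [ballF, Finset.mem_singleton] at hx ⊢; simp [hx]
  | succ n ih =>
    intro x hx
    rcases Finset.mem_union.mp hx with h | h
    · exact ballF_subset_succ S n (ih h)
    · rcases Finset.mem_mul.mp h with ⟨y, hy, u, hu, rfl⟩
      have := smul_mem_ballF (hS u hu) (ih hy)
      simpa [mul_inv_rev] using this

lemma mul_mem_ballF_add {m : ℕ} {x : Γ} (hx : x ∈ ballF S m) :
    ∀ {n : ℕ} {y : Γ}, y ∈ ballF S n → x * y ∈ ballF S (m + n) := by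
  intro n
  induction n with
  | zero => intro y hy; simp only [ballF, Finset.mem_singleton] at hy; subst hy; simpa
  | succ n ih =>
    intro y hy
    rcases Finset.mem_union.mp hy with h | h
    · exact ballF_mono S (by omega) (ih h)
    · rcases Finset.mem_mul.mp h with ⟨z, hz, u, hu, rfl⟩
      have := mul_mem_ballF (ih hz) hu
      rw [← Nat.add_assoc]; simpa [mul_assoc] using this

lemma exists_mem_ballF (hS : ∀ s ∈ S, s⁻¹ ∈ S)
    (hgen : Subgroup.closure (S : Set Γ) = ⊤) (x : Γ) : ∃ n, x ∈ ballF S n := by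
  let H : Subgroup Γ :=
    { carrier := {x | ∃ n, x ∈ ballF S n}
      one_mem' := ⟨0, by simp [ballF]⟩
      mul_mem' := by
        rintro a b ⟨m, hm⟩ ⟨n, hn⟩
        exact ⟨m + n, mul_mem_ballF_add hm hn⟩
      inv_mem' := by
        rintro a ⟨n, hn⟩
        exact ⟨n, inv_mem_ballF hS hn⟩ }
  have hSH : (S : Set Γ) ⊆ H := by
    intro s hs
    refine ⟨1, ?_⟩
    have : (1:Γ) * s ∈ ballF S 0 * S := Finset.mul_mem_mul (by simp [ballF]) hs
    simpa [ballF] using Finset.mem_union_right (ballF S 0) this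
  have : (⊤ : Subgroup Γ) ≤ H := hgen ▸ Subgroup.closure_le H |>.mpr hSH
  exact this (Subgroup.mem_top x)

lemma mem_ballF_wordNorm (hS : ∀ s ∈ S, s⁻¹ ∈ S)
    (hgen : Subgroup.closure (S : Set Γ) = ⊤) (x : Γ) :
    x ∈ ballF S (wordNorm S x) :=
  Nat.sInf_mem (exists_mem_ballF hS hgen x)

end S1
section S2
variable {α : Type} [DecidableEq α]

lemma exch_eq_swap (x y : α) (η : α → Bool) :
    exch x y η = fun z => η (Equiv.swap x y z) := by
  funext z
  simp only [exch, Equiv.swap_apply_def]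
  split_ifs <;> rfl

lemma exch_self (x : α) (η : α → Bool) : exch x x η = η := by
  funext z; simp only [exch]; split_ifs with h <;> simp [h]

lemma exch_exch (x y : α) (η : α → Bool) : exch x y (exch x y η) = η := by
  funext z
  simp [exch_eq_swap, Equiv.swap_apply_self]

lemma exch_involutive (x y : α) : Function.Involutive (exch x y : (α → Bool) → α → Bool) :=
  fun η => exch_exch x y η

lemma exch_bijective (x y : α) : Function.Bijective (exch x y : (α → Bool) → α → Bool) :=
  (exch_involutive x y).bijective

/-- Conjugation identity for exchanges: moving the transposition `v ↔ t` through `w`. -/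
lemma exch_conj {v w t : α} (hvw : v ≠ w) (hvt : v ≠ t) (η : α → Bool) :
    exch v t η = exch w t (exch v w (exch w t η)) := by
  have hperm : Equiv.swap w t * Equiv.swap v w * Equiv.swap w t = Equiv.swap t v :=
    Equiv.swap_mul_swap_mul_swap hvw hvt
  funext z
  simp only [exch_eq_swap]
  have : Equiv.swap w t (Equiv.swap v w (Equiv.swap w t z)) = Equiv.swap v t z := by
    have := congrArg (fun (p : Equiv.Perm α) => p z) hperm
    simpa [Equiv.Perm.mul_apply, Equiv.swap_comm t v] using this
  rw [this]

end S2
section S3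
open Real in
lemma sqrt_sum_sq_add_le {ι : Type*} (s : Finset ι) (f g : ι → ℝ) :
    Real.sqrt (∑ i ∈ s, (f i + g i)^2) ≤
      Real.sqrt (∑ i ∈ s, f i ^ 2) + Real.sqrt (∑ i ∈ s, g i ^ 2) := by
  have hf : (0:ℝ) ≤ ∑ i ∈ s, f i ^ 2 := Finset.sum_nonneg fun _ _ => sq_nonneg _
  have hg : (0:ℝ) ≤ ∑ i ∈ s, g i ^ 2 := Finset.sum_nonneg fun _ _ => sq_nonneg _
  have key : ∑ i ∈ s, (f i + g i)^2 ≤ (Real.sqrt (∑ i ∈ s, f i ^ 2) + Real.sqrt (∑ i ∈ s, g i ^ 2))^2 := by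
    have hcs := Real.sum_mul_le_sqrt_mul_sqrt s f g
    have expand : ∑ i ∈ s, (f i + g i)^2
        = ∑ i ∈ s, f i ^ 2 + 2 * (∑ i ∈ s, f i * g i) + ∑ i ∈ s, g i ^ 2 := by
      rw [Finset.mul_sum, ← Finset.sum_add_distrib, ← Finset.sum_add_distrib]
      congr 1; funext i; ring
    rw [expand]
    have h1 : (Real.sqrt (∑ i ∈ s, f i ^ 2))^2 = ∑ i ∈ s, f i ^ 2 := Real.sq_sqrt hf
    have h2 : (Real.sqrt (∑ i ∈ s, g i ^ 2))^2 = ∑ i ∈ s, g i ^ 2 := Real.sq_sqrt hg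
    nlinarith [hcs]
  calc Real.sqrt (∑ i ∈ s, (f i + g i)^2) ≤ Real.sqrt ((Real.sqrt (∑ i ∈ s, f i ^ 2) + Real.sqrt (∑ i ∈ s, g i ^ 2))^2) :=
        Real.sqrt_le_sqrt key
    _ = _ := Real.sqrt_sq (by positivity)

lemma real_limsup_le {α : Type*} {l : Filter α} [l.NeBot] {u : α → ℝ} {b : ℝ}
    (h0 : ∀ᶠ x in l, 0 ≤ u x) (hb : ∀ᶠ x in l, u x ≤ b) : Filter.limsup u l ≤ b := by
  refine Filter.limsup_le_of_le ?_ hb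
  refine ⟨0, fun a ha => ?_⟩
  rw [Filter.eventually_map] at ha
  obtain ⟨x, hx1, hx2⟩ := (h0.and ha).exists
  exact le_trans hx1 hx2

lemma real_le_limsup {α : Type*} {l : Filter α} [l.NeBot] {u : α → ℝ} {a b : ℝ}
    (hb : ∀ᶠ x in l, u x ≤ b) (ha : ∀ᶠ x in l, a ≤ u x) : a ≤ Filter.limsup u l := by
  refine Filter.le_limsup_of_frequently_le ha.frequently ?_
  exact ⟨b, by rwa [Filter.eventually_map]⟩

end S3
set_option linter.unusedSectionVars false
section S4
variable {Γ : Type} [Group Γ] [DecidableEq Γ] {S : Finset Γ}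
variable (N : Subgroup Γ) [N.Normal]

lemma liftZ_unit {γ : Γ} (hγ : γ ∈ N) (η : Conf N) (z : Γ) :
    liftZ N η (γ * z) = liftZ N η z := by
  unfold liftZ
  congr 1
  rw [QuotientGroup.mk_mul, (QuotientGroup.eq_one_iff γ).mpr hγ, one_mul]

lemma cQ_wd (c : JumpRate S) {x : Γ} {v : Γ ⧸ N} (hx : QuotientGroup.mk x = v)
    (s : Gen S) (η : Conf N) : c.c x s (liftZ N η) = cQ N c v s η := by
  have hout : QuotientGroup.mk (Quotient.out v) = v := QuotientGroup.out_eq' v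
  have hγ : x⁻¹ * Quotient.out v ∈ N := QuotientGroup.eq.mp (hx.trans hout.symm)
  have hδ : x * (x⁻¹ * Quotient.out v) * x⁻¹ ∈ N :=
    Subgroup.Normal.conj_mem ‹N.Normal› _ hγ x
  set δ := x * (x⁻¹ * Quotient.out v) * x⁻¹ with hδdef
  have hout2 : Quotient.out v = δ * x := by
    simp [hδdef, mul_assoc]
  have hlift : (fun z => liftZ N η (δ⁻¹ * z)) = liftZ N η := by
    funext z
    exact liftZ_unit N (N.inv_mem hδ) η z
  calc c.c x s (liftZ N η) = c.c (δ * x) s (fun z => liftZ N η (δ⁻¹ * z)) := by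
        rw [hlift, ← c.invariant δ x s (liftZ N η), hlift]
    _ = cQ N c v s η := by rw [cQ, hout2, hlift]

lemma liftZ_actQ (g : Γ) (η : Conf N) :
    liftZ N (actQ N (QuotientGroup.mk g) η) = fun z => liftZ N η (g⁻¹ * z) := by
  funext z
  simp [liftZ, actQ, QuotientGroup.mk_mul, QuotientGroup.mk_inv]

lemma cQ_act (c : JumpRate S) (σ : Γ ⧸ N) (v : Γ ⧸ N) (s : Gen S) (η : Conf N) :
    cQ N c (σ * v) s (actQ N σ η) = cQ N c v s η := by
  obtain ⟨g, rfl⟩ : ∃ g : Γ, QuotientGroup.mk g = σ := ⟨σ.out, QuotientGroup.out_eq' σ⟩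
  have hmk : QuotientGroup.mk (g * Quotient.out v) = QuotientGroup.mk g * v := by
    rw [QuotientGroup.mk_mul, QuotientGroup.out_eq' v]
  rw [← cQ_wd N c hmk s (actQ N (QuotientGroup.mk g) η), liftZ_actQ]
  have := c.invariant g (Quotient.out v) s (liftZ N η)
  rw [this]
  rfl

lemma actQ_actQ (σ : Γ ⧸ N) (η : Conf N) : actQ N σ⁻¹ (actQ N σ η) = η := by
  funext z
  simp [actQ]

lemma actQ_bijective (σ : Γ ⧸ N) : Function.Bijective (actQ N σ) := by
  refine Function.bijective_iff_has_inverse.mpr ⟨actQ N σ⁻¹, fun η => actQ_actQ N σ η, fun η => ?_⟩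
  have := actQ_actQ N σ⁻¹ η
  simpa using this

lemma exchQ_eq_exch [DecidableEq (Γ ⧸ N)] (v : Γ ⧸ N) (s : Γ) :
    exchQ N v s = exch v (v * QuotientGroup.mk s) := rfl

lemma exchQ_act [DecidableEq (Γ ⧸ N)] (σ v : Γ ⧸ N) (s : Γ) (η : Conf N) :
    exchQ N (σ * v) s (actQ N σ η) = actQ N σ (exchQ N v s η) := by
  funext z
  have h1 : (σ⁻¹ * z = v) ↔ (z = σ * v) :=
    ⟨fun h => by rw [← h, mul_inv_cancel_left], fun h => by rw [h, inv_mul_cancel_left]⟩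
  have h2 : (σ⁻¹ * z = v * (QuotientGroup.mk s : Γ ⧸ N)) ↔
      (z = σ * v * QuotientGroup.mk s) :=
    ⟨fun h => by rw [mul_assoc, ← h, mul_inv_cancel_left],
     fun h => by rw [h, mul_assoc, inv_mul_cancel_left]⟩
  have e1 : σ⁻¹ * (σ * v * (QuotientGroup.mk s : Γ ⧸ N)) = v * QuotientGroup.mk s := by
    group
  have e2 : σ⁻¹ * (σ * v) = v := by group
  simp only [exchQ, exch, actQ, ← h1, ← h2, e1, e2]

end S4
set_option linter.unusedSectionVars false
section S5
variable {Γ : Type} [Group Γ] [DecidableEq Γ] {S : Finset Γ}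
variable (N : Subgroup Γ) [N.Normal] [Fintype (Γ ⧸ N)] [DecidableEq (Γ ⧸ N)]

/-- The `L²`-energy of a transformation `T` of the configuration space w.r.t. `√μ`. -/
noncomputable def qE (μ : Conf N → ℝ) (T : Conf N → Conf N) : ℝ :=
  ∑ η : Conf N, (Real.sqrt (μ (T η)) - Real.sqrt (μ η))^2

lemma qE_nonneg (μ : Conf N → ℝ) (T : Conf N → Conf N) : 0 ≤ qE N μ T :=
  Finset.sum_nonneg fun _ _ => sq_nonneg _

lemma sum_comp_bij {T : Conf N → Conf N} (hT : Function.Bijective T) (G : Conf N → ℝ) :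
    ∑ η : Conf N, G (T η) = ∑ η : Conf N, G η :=
  Fintype.sum_bijective T hT (fun η => G (T η)) G (fun _ => rfl)

/-- Single-edge Dirichlet energy of the edge `(v, s)`. -/
noncomputable def Ds (c : JumpRate S) (μ : Conf N → ℝ) (v : Γ ⧸ N) (s : Gen S) : ℝ :=
  ∑ η : Conf N, cQ N c v s η *
    (Real.sqrt (μ (exchQ N v (s : Γ) η)) - Real.sqrt (μ η))^2

lemma cQ_nonneg (c : JumpRate S) (v : Γ ⧸ N) (s : Gen S) (η : Conf N) :
    0 ≤ cQ N c v s η :=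
  le_trans c.c₀_pos.le (c.nondeg _ _ _)

lemma Ds_nonneg (c : JumpRate S) (μ : Conf N → ℝ) (v : Γ ⧸ N) (s : Gen S) :
    0 ≤ Ds N c μ v s :=
  Finset.sum_nonneg fun η _ => mul_nonneg (cQ_nonneg N c v s η) (sq_nonneg _)

lemma ImGen_eq_sum (c : JumpRate S) (μ : Conf N → ℝ) :
    ImGen N c μ = ∑ e : (Γ ⧸ N) × Gen S, ∑ η : Conf N,
      cQ N c e.1 e.2 η *
        (Real.sqrt (μ η) * (Real.sqrt (μ η) - Real.sqrt (μ (exchQ N e.1 (e.2 : Γ) η)))) := by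
  have hcard : (0:ℝ) < (Fintype.card (Conf N) : ℝ) := by
    exact_mod_cast Fintype.card_pos
  have key : ∀ η : Conf N,
      nuU N η * (sqrtDens N μ η * Lgen N c (sqrtDens N μ) η)
        = ∑ e : (Γ ⧸ N) × Gen S, cQ N c e.1 e.2 η *
            (Real.sqrt (μ η) * (Real.sqrt (μ (exchQ N e.1 (e.2 : Γ) η)) - Real.sqrt (μ η))) := by
    intro η
    unfold nuU sqrtDens dens Lgen
    rw [Finset.mul_sum, Finset.mul_sum]
    refine Finset.sum_congr rfl fun e _ => ?_
    dsimp only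
    have h1 : Real.sqrt ((Fintype.card (Conf N) : ℝ) * μ η)
        = Real.sqrt (Fintype.card (Conf N) : ℝ) * Real.sqrt (μ η) :=
      Real.sqrt_mul hcard.le _
    have h2 : Real.sqrt ((Fintype.card (Conf N) : ℝ) * μ (exchQ N e.1 (e.2 : Γ) η))
        = Real.sqrt (Fintype.card (Conf N) : ℝ) * Real.sqrt (μ (exchQ N e.1 (e.2 : Γ) η)) :=
      Real.sqrt_mul hcard.le _
    have h3 : Real.sqrt (Fintype.card (Conf N) : ℝ) * Real.sqrt (Fintype.card (Conf N) : ℝ)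
        = (Fintype.card (Conf N) : ℝ) := Real.mul_self_sqrt hcard.le
    rw [h1, h2]
    have : ((Fintype.card (Conf N) : ℝ))⁻¹ *
        (Real.sqrt (Fintype.card (Conf N) : ℝ) * Real.sqrt (μ η) *
        (cQ N c e.1 e.2 η * (Real.sqrt (Fintype.card (Conf N) : ℝ) *
            Real.sqrt (μ (exchQ N e.1 (e.2 : Γ) η))
          - Real.sqrt (Fintype.card (Conf N) : ℝ) * Real.sqrt (μ η))))
        = (Real.sqrt (Fintype.card (Conf N) : ℝ) * Real.sqrt (Fintype.card (Conf N) : ℝ) *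
            ((Fintype.card (Conf N) : ℝ))⁻¹) *
          (cQ N c e.1 e.2 η * (Real.sqrt (μ η) *
            (Real.sqrt (μ (exchQ N e.1 (e.2 : Γ) η)) - Real.sqrt (μ η)))) := by ring
    rw [this, h3, mul_inv_cancel₀ hcard.ne', one_mul]
  unfold ImGen
  rw [Finset.sum_congr rfl fun η _ => key η, Finset.sum_comm, ← Finset.sum_neg_distrib]
  refine Finset.sum_congr rfl fun e _ => ?_
  rw [← Finset.sum_neg_distrib]
  exact Finset.sum_congr rfl fun η _ => by ring

lemma ImGen_eq_Ds (c : JumpRate S) (μ : Conf N → ℝ)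
    (hsymm : ∀ (v: Γ ⧸ N) (s : Gen S) (η : Conf N),
      cQ N c v s (exchQ N v (s : Γ) η) = cQ N c v s η) :
    ImGen N c μ = (1/2) * ∑ e : (Γ ⧸ N) × Gen S, Ds N c μ e.1 e.2 := by
  rw [ImGen_eq_sum, Finset.mul_sum]
  refine Finset.sum_congr rfl fun e _ => ?_
  unfold Ds
  have hTT : ∀ η, exchQ N e.1 (e.2 : Γ) (exchQ N e.1 (e.2 : Γ) η) = η :=
    fun η => exch_exch _ _ η
  have hTb : Function.Bijective (exchQ N e.1 (e.2 : Γ)) := exch_bijective _ _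
  have h := sum_comp_bij N hTb
    (fun η => cQ N c e.1 e.2 η * (Real.sqrt (μ (exchQ N e.1 (e.2 : Γ) η)))^2)
  have h' : ∑ η : Conf N, cQ N c e.1 e.2 (exchQ N e.1 (e.2 : Γ) η) *
        (Real.sqrt (μ (exchQ N e.1 (e.2 : Γ) (exchQ N e.1 (e.2 : Γ) η))))^2
      = ∑ η : Conf N, cQ N c e.1 e.2 η * (Real.sqrt (μ η))^2 :=
    Finset.sum_congr rfl fun η _ => by rw [hTT η, hsymm e.1 e.2 η]
  have hswap : ∑ η : Conf N, cQ N c e.1 e.2 η *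
        (Real.sqrt (μ (exchQ N e.1 (e.2 : Γ) η)))^2
      = ∑ η : Conf N, cQ N c e.1 e.2 η * (Real.sqrt (μ η))^2 := h.symm.trans h'
  have expand : ∑ η : Conf N, cQ N c e.1 e.2 η *
        (Real.sqrt (μ (exchQ N e.1 (e.2 : Γ) η)) - Real.sqrt (μ η))^2
      = ∑ η : Conf N, (2*(cQ N c e.1 e.2 η * (Real.sqrt (μ η) *
          (Real.sqrt (μ η) - Real.sqrt (μ (exchQ N e.1 (e.2 : Γ) η)))))
        + (cQ N c e.1 e.2 η * (Real.sqrt (μ (exchQ N e.1 (e.2 : Γ) η)))^2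
          - cQ N c e.1 e.2 η * (Real.sqrt (μ η))^2)) :=
    Finset.sum_congr rfl fun η _ => by ring
  rw [expand, Finset.sum_add_distrib, Finset.sum_sub_distrib, hswap, sub_self, add_zero,
    ← Finset.mul_sum]
  ring

end S5
section S6
variable {Γ : Type} [Group Γ] [DecidableEq Γ] {S : Finset Γ}
variable (N : Subgroup Γ) [N.Normal] [Fintype (Γ ⧸ N)] [DecidableEq (Γ ⧸ N)]

lemma Ds_act (c : JumpRate S) (μ : Conf N → ℝ) (hinv : IsInvariant N μ)
    (σ v : Γ ⧸ N) (s : Gen S) : Ds N c μ (σ * v) s = Ds N c μ v s := by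
  unfold Ds
  have hb := actQ_bijective N σ
  have h := (sum_comp_bij N hb (fun η => cQ N c (σ * v) s η *
    (Real.sqrt (μ (exchQ N (σ * v) (s : Γ) η)) - Real.sqrt (μ η))^2)).symm
  rw [h]
  refine Finset.sum_congr rfl fun η _ => ?_
  rw [cQ_act N c σ v s η, exchQ_act N σ v (s : Γ) η, hinv σ (exchQ N v (s:Γ) η), hinv σ η]

lemma Ds_eq_of_invariant (c : JumpRate S) (μ : Conf N → ℝ) (hinv : IsInvariant N μ)
    (v w : Γ ⧸ N) (s : Gen S) : Ds N c μ v s = Ds N c μ w s := by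
  have := Ds_act N c μ hinv (v * w⁻¹) w s
  rw [inv_mul_cancel_right] at this
  exact this.symm ▸ (by rw [← this])

lemma Ds_le_of_ImGen (c : JumpRate S) (μ : Conf N → ℝ) (hinv : IsInvariant N μ)
    (hsymm : ∀ (v : Γ ⧸ N) (s : Gen S) (η : Conf N),
      cQ N c v s (exchQ N v (s : Γ) η) = cQ N c v s η)
    {K : ℝ} (hIm : ImGen N c μ ≤ K) (v : Γ ⧸ N) (s : Gen S) :
    Ds N c μ v s ≤ 2 * K / (Fintype.card (Γ ⧸ N) : ℝ) := by
  have hcard : (0:ℝ) < (Fintype.card (Γ ⧸ N) : ℝ) := by exact_mod_cast Fintype.card_pos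
  have hsum : (Fintype.card (Γ ⧸ N) : ℝ) * Ds N c μ v s
      = ∑ w : Γ ⧸ N, Ds N c μ w s := by
    rw [Finset.sum_congr rfl fun w _ => (Ds_eq_of_invariant N c μ hinv w v s)]
    simp [Finset.sum_const, mul_comm]
  have hle : ∑ w : Γ ⧸ N, Ds N c μ w s ≤ ∑ e : (Γ ⧸ N) × Gen S, Ds N c μ e.1 e.2 := by
    rw [Fintype.sum_prod_type]
    refine Finset.sum_le_sum fun w _ => ?_
    exact Finset.single_le_sum (f := fun s' : Gen S => Ds N c μ w s')
      (fun s' _ => Ds_nonneg N c μ w s') (Finset.mem_univ s)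
  have h2 : ∑ e : (Γ ⧸ N) × Gen S, Ds N c μ e.1 e.2 = 2 * ImGen N c μ := by
    rw [ImGen_eq_Ds N c μ hsymm]; ring
  have : (Fintype.card (Γ ⧸ N) : ℝ) * Ds N c μ v s ≤ 2 * K := by
    rw [hsum]
    calc ∑ w : Γ ⧸ N, Ds N c μ w s ≤ 2 * ImGen N c μ := by rw [← h2]; exact hle
      _ ≤ 2 * K := by linarith
  rw [le_div_iff₀ hcard, mul_comm]
  exact this

lemma qE_le_Ds (c : JumpRate S) (μ : Conf N → ℝ) (v : Γ ⧸ N) (s : Gen S) :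
    c.c₀ * qE N μ (exchQ N v (s : Γ)) ≤ Ds N c μ v s := by
  unfold qE Ds
  rw [Finset.mul_sum]
  refine Finset.sum_le_sum fun η _ => ?_
  exact mul_le_mul_of_nonneg_right (c.nondeg _ _ _) (sq_nonneg _)

end S6
section S7
variable {Γ : Type} [Group Γ] [DecidableEq Γ] {S : Finset Γ}
variable (N : Subgroup Γ) [N.Normal] [Fintype (Γ ⧸ N)] [DecidableEq (Γ ⧸ N)]

lemma sqrt_qE_conj (μ : Conf N → ℝ) {A B : Conf N → Conf N}
    (hA : Function.Bijective A) (hB : Function.Bijective B) :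
    Real.sqrt (qE N μ (fun η => A (B (A η))))
      ≤ 2 * Real.sqrt (qE N μ A) + Real.sqrt (qE N μ B) := by
  set u : Conf N → ℝ := fun η => Real.sqrt (μ η) with hu
  have hstep : qE N μ (fun η => A (B (A η)))
      = ∑ η : Conf N, ((u (A (B (A η))) - u (B (A η)))
          + ((u (B (A η)) - u (A η)) + (u (A η) - u η)))^2 := by
    unfold qE
    exact Finset.sum_congr rfl fun η _ => by ring
  have h1 : ∑ η : Conf N, (u (A (B (A η))) - u (B (A η)))^2 = qE N μ A := by
    have := sum_comp_bij N (hB.comp hA) (fun η => (u (A η) - u η)^2)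
    unfold qE
    exact this
  have h2 : ∑ η : Conf N, (u (B (A η)) - u (A η))^2 = qE N μ B := by
    have := sum_comp_bij N hA (fun η => (u (B η) - u η)^2)
    unfold qE
    exact this
  have h3 : ∑ η : Conf N, (u (A η) - u η)^2 = qE N μ A := rfl
  calc Real.sqrt (qE N μ (fun η => A (B (A η))))
      = Real.sqrt (∑ η : Conf N, ((u (A (B (A η))) - u (B (A η)))
          + ((u (B (A η)) - u (A η)) + (u (A η) - u η)))^2) := by rw [hstep]
    _ ≤ Real.sqrt (∑ η : Conf N, (u (A (B (A η))) - u (B (A η)))^2)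
        + Real.sqrt (∑ η : Conf N, ((u (B (A η)) - u (A η)) + (u (A η) - u η))^2) :=
        sqrt_sum_sq_add_le _ _ _
    _ ≤ Real.sqrt (∑ η : Conf N, (u (A (B (A η))) - u (B (A η)))^2)
        + (Real.sqrt (∑ η : Conf N, (u (B (A η)) - u (A η))^2)
          + Real.sqrt (∑ η : Conf N, (u (A η) - u η)^2)) := by
        have := sqrt_sum_sq_add_le (Finset.univ : Finset (Conf N))
          (fun η => u (B (A η)) - u (A η)) (fun η => u (A η) - u η)
        linarith
    _ = 2 * Real.sqrt (qE N μ A) + Real.sqrt (qE N μ B) := by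
        rw [h1, h2, h3]; ring

/-- Moving particle lemma: energy bound for exchanging values at `v` and `v·x̄`. -/
lemma sqrt_qE_exch_le (μ : Conf N → ℝ) {β : ℝ} (hβ : 0 ≤ β)
    (hedge : ∀ (v : Γ ⧸ N) (s : Γ), s ∈ S →
      qE N μ (exch v (v * QuotientGroup.mk s)) ≤ β^2) :
    ∀ (n : ℕ) (x : Γ), x ∈ ballF S n → ∀ v : Γ ⧸ N,
      Real.sqrt (qE N μ (exch v (v * QuotientGroup.mk x))) ≤ 2 * n * β := by
  intro n
  induction n with
  | zero =>
    intro x hx v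
    simp only [ballF, Finset.mem_singleton] at hx
    subst hx
    have : qE N μ (exch v (v * QuotientGroup.mk 1)) = 0 := by
      unfold qE
      rw [Finset.sum_eq_zero]
      intro η _
      rw [QuotientGroup.mk_one, mul_one, exch_self]
      ring
    rw [this, Real.sqrt_zero]
    simp
  | succ n ih =>
    intro x hx v
    rcases Finset.mem_union.mp hx with h | h
    · have := ih x h v
      have hb : 2 * (n:ℝ) * β ≤ 2 * (n+1 : ℕ) * β := by
        push_cast; nlinarith
      linarith
    · rcases Finset.mem_mul.mp h with ⟨y, hy, s, hs, rfl⟩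
      by_cases hx1 : v * QuotientGroup.mk (y * s) = v
      · have : qE N μ (exch v (v * QuotientGroup.mk (y * s))) = 0 := by
          unfold qE
          rw [Finset.sum_eq_zero]
          intro η _
          rw [hx1, exch_self]
          ring
        rw [this, Real.sqrt_zero]
        positivity
      · by_cases hw : v * QuotientGroup.mk y = v
        · -- `mk y = 1`, so this is a single edge
          have hmk : v * QuotientGroup.mk (y * s) = v * QuotientGroup.mk s := by
            rw [QuotientGroup.mk_mul, ← mul_assoc, hw]
          rw [hmk]
          have h1 : qE N μ (exch v (v * QuotientGroup.mk s)) ≤ β^2 := hedge v s hs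
          have : Real.sqrt (qE N μ (exch v (v * QuotientGroup.mk s)))
              ≤ Real.sqrt (β^2) := Real.sqrt_le_sqrt h1
          rw [Real.sqrt_sq hβ] at this
          have hb : β ≤ 2 * ((n:ℝ)+1) * β := by nlinarith
          push_cast
          linarith
        · by_cases hts : v * QuotientGroup.mk (y * s) = v * QuotientGroup.mk y
          · -- `mk s = 1`: reduces to the shorter word `y`
            rw [hts]
            have := ih y hy v
            have hb : 2 * (n:ℝ) * β ≤ 2 * ((n:ℝ)+1) * β := by nlinarith
            push_cast
            linarith
          · -- generic case: conjugate through `w = v·ȳ`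
            set w : Γ ⧸ N := v * QuotientGroup.mk y with hwdef
            set tt : Γ ⧸ N := v * QuotientGroup.mk (y * s) with httdef
            have htw : tt = w * QuotientGroup.mk s := by
              rw [httdef, hwdef, QuotientGroup.mk_mul, mul_assoc]
            have hvw : v ≠ w := fun hh => hw hh.symm
            have hvt : v ≠ tt := fun hh => hx1 hh.symm
            have hconj : (exch v tt : Conf N → Conf N)
                = fun η => exch w tt (exch v w (exch w tt η)) := by
              funext η
              exact exch_conj hvw hvt η
            have hA : Function.Bijective (exch w tt : Conf N → Conf N) :=
              exch_bijective w tt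
            have hB : Function.Bijective (exch v w : Conf N → Conf N) :=
              exch_bijective v w
            have hbound := sqrt_qE_conj N μ hA hB
            rw [← hconj] at hbound
            have hAe : Real.sqrt (qE N μ (exch w tt)) ≤ β := by
              have h1 : qE N μ (exch w (w * QuotientGroup.mk s)) ≤ β^2 := hedge w s hs
              rw [← htw] at h1
              have := Real.sqrt_le_sqrt h1
              rwa [Real.sqrt_sq hβ] at this
            have hBe : Real.sqrt (qE N μ (exch v w)) ≤ 2 * n * β := ih y hy v
            push_cast
            linarith

/-- Swapping two coordinates changes expectations by at most `2√(qE)`. -/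
lemma emeas_comp_sub_le (μ : Conf N → ℝ) (hprob : IsProb N μ)
    {T : Conf N → Conf N} (hT : Function.Bijective T) (hTT : ∀ η, T (T η) = η)
    (f : Conf N → ℝ) (hf : ∀ η, |f η| ≤ 1) :
    |∑ η : Conf N, μ η * f (T η) - ∑ η : Conf N, μ η * f η|
      ≤ 2 * Real.sqrt (qE N μ T) := by
  have step1 : ∑ η : Conf N, μ η * f (T η) = ∑ η : Conf N, μ (T η) * f η := by
    have := sum_comp_bij N hT (fun η => μ (T η) * f η)
    calc ∑ η : Conf N, μ η * f (T η)
        = ∑ η : Conf N, μ (T (T η)) * f (T η) := by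
          exact Finset.sum_congr rfl fun η _ => by rw [hTT η]
      _ = ∑ η : Conf N, μ (T η) * f η := this
  rw [step1, ← Finset.sum_sub_distrib]
  have habs : |∑ η : Conf N, (μ (T η) * f η - μ η * f η)|
      ≤ ∑ η : Conf N, |μ (T η) - μ η| := by
    calc |∑ η : Conf N, (μ (T η) * f η - μ η * f η)|
        ≤ ∑ η : Conf N, |μ (T η) * f η - μ η * f η| := Finset.abs_sum_le_sum_abs _ _
      _ ≤ ∑ η : Conf N, |μ (T η) - μ η| := by
          refine Finset.sum_le_sum fun η _ => ?_
          rw [show μ (T η) * f η - μ η * f η = (μ (T η) - μ η) * f η by ring, abs_mul]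
          calc |μ (T η) - μ η| * |f η| ≤ |μ (T η) - μ η| * 1 :=
                mul_le_mul_of_nonneg_left (hf η) (abs_nonneg _)
            _ = |μ (T η) - μ η| := mul_one _
  refine habs.trans ?_
  set u : Conf N → ℝ := fun η => Real.sqrt (μ η) with hu
  have hfact : ∀ η, |μ (T η) - μ η| = |u (T η) - u η| * (u (T η) + u η) := by
    intro η
    have h1 : μ (T η) = (u (T η))^2 := (Real.sq_sqrt (hprob.1 _)).symm
    have h2 : μ η = (u η)^2 := (Real.sq_sqrt (hprob.1 _)).symm
    rw [h1, h2, show (u (T η))^2 - (u η)^2 = (u (T η) - u η) * (u (T η) + u η) by ring,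
      abs_mul, abs_of_nonneg (by positivity : (0:ℝ) ≤ u (T η) + u η)]
  rw [Finset.sum_congr rfl fun η _ => hfact η]
  have hcs := Real.sum_mul_le_sqrt_mul_sqrt (Finset.univ : Finset (Conf N))
    (fun η => |u (T η) - u η|) (fun η => u (T η) + u η)
  have hsq : ∑ η : Conf N, |u (T η) - u η|^2 = qE N μ T := by
    unfold qE
    exact Finset.sum_congr rfl fun η _ => sq_abs _
  have hsum2 : ∑ η : Conf N, (u (T η) + u η)^2 ≤ 4 := by
    have hb : ∀ η : Conf N, (u (T η) + u η)^2 ≤ 2 * ((u (T η))^2 + (u η)^2) :=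
      fun η => by nlinarith [sq_nonneg (u (T η) - u η)]
    calc ∑ η : Conf N, (u (T η) + u η)^2
        ≤ ∑ η : Conf N, 2 * ((u (T η))^2 + (u η)^2) := Finset.sum_le_sum fun η _ => hb η
      _ = 2 * (∑ η : Conf N, (u (T η))^2 + ∑ η : Conf N, (u η)^2) := by
          rw [← Finset.sum_add_distrib, Finset.mul_sum]
      _ = 4 := by
          have e1 : ∑ η : Conf N, (u (T η))^2 = 1 := by
            have hcomp := sum_comp_bij N hT (fun η => (u η)^2)
            rw [hcomp]
            calc ∑ η : Conf N, (u η)^2 = ∑ η : Conf N, μ η :=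
                  Finset.sum_congr rfl fun η _ => Real.sq_sqrt (hprob.1 η)
              _ = 1 := hprob.2
          have e2 : ∑ η : Conf N, (u η)^2 = 1 := by
            calc ∑ η : Conf N, (u η)^2 = ∑ η : Conf N, μ η :=
                  Finset.sum_congr rfl fun η _ => Real.sq_sqrt (hprob.1 η)
              _ = 1 := hprob.2
          rw [e1, e2]; norm_num
  have hfin : Real.sqrt (∑ η : Conf N, (u (T η) + u η)^2) ≤ 2 := by
    have := Real.sqrt_le_sqrt hsum2
    rwa [show (4:ℝ) = 2^2 by norm_num, Real.sqrt_sq (by norm_num : (0:ℝ) ≤ 2)] at this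
  calc ∑ η : Conf N, |u (T η) - u η| * (u (T η) + u η)
      ≤ Real.sqrt (∑ η : Conf N, |u (T η) - u η|^2)
        * Real.sqrt (∑ η : Conf N, (u (T η) + u η)^2) := hcs
    _ ≤ Real.sqrt (qE N μ T) * 2 := by
        rw [hsq]
        exact mul_le_mul_of_nonneg_left hfin (Real.sqrt_nonneg _)
    _ = 2 * Real.sqrt (qE N μ T) := by ring

end S7
section S8
variable {Γ : Type} [Group Γ] [DecidableEq Γ] {S : Finset Γ}
variable (N : Subgroup Γ) [N.Normal] [Fintype (Γ ⧸ N)] [DecidableEq (Γ ⧸ N)]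

lemma emeas_abs_le_sqrt (μ : Conf N → ℝ) (hprob : IsProb N μ) (X : Conf N → ℝ) :
    Emeas N μ (fun η => |X η|) ≤ Real.sqrt (Emeas N μ (fun η => (X η)^2)) := by
  have h := Finset.sum_mul_sq_le_sq_mul_sq (Finset.univ : Finset (Conf N))
    (fun η => Real.sqrt (μ η)) (fun η => Real.sqrt (μ η) * |X η|)
  have e1 : ∑ η : Conf N, Real.sqrt (μ η) * (Real.sqrt (μ η) * |X η|)
      = ∑ η : Conf N, μ η * |X η| :=
    Finset.sum_congr rfl fun η _ => by
      rw [← mul_assoc, Real.mul_self_sqrt (hprob.1 η)]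
  have e2 : ∑ η : Conf N, (Real.sqrt (μ η))^2 = 1 := by
    calc ∑ η : Conf N, (Real.sqrt (μ η))^2 = ∑ η : Conf N, μ η :=
          Finset.sum_congr rfl fun η _ => Real.sq_sqrt (hprob.1 η)
      _ = 1 := hprob.2
  have e3 : ∑ η : Conf N, (Real.sqrt (μ η) * |X η|)^2
      = ∑ η : Conf N, μ η * (X η)^2 :=
    Finset.sum_congr rfl fun η _ => by
      rw [mul_pow, Real.sq_sqrt (hprob.1 η), sq_abs]
  rw [e1, e2, e3, one_mul] at h
  have hnn : 0 ≤ ∑ η : Conf N, μ η * |X η| :=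
    Finset.sum_nonneg fun η _ => mul_nonneg (hprob.1 η) (abs_nonneg _)
  have : ∑ η : Conf N, μ η * |X η|
      = Real.sqrt ((∑ η : Conf N, μ η * |X η|)^2) := (Real.sqrt_sq hnn).symm
  calc Emeas N μ (fun η => |X η|) = ∑ η : Conf N, μ η * |X η| := rfl
    _ = Real.sqrt ((∑ η : Conf N, μ η * |X η|)^2) := this
    _ ≤ Real.sqrt (∑ η : Conf N, μ η * (X η)^2) := Real.sqrt_le_sqrt h
    _ = Real.sqrt (Emeas N μ (fun η => (X η)^2)) := rfl

lemma main_estimate (μ : Conf N → ℝ) (hprob : IsProb N μ)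
    (Fi : Finset Γ) (hn : 0 < Fi.card)
    (hinj : Set.InjOn (fun τ : Γ => (QuotientGroup.mk τ : Γ ⧸ N)) (Fi : Set Γ))
    (σ : Γ) {κ : ℝ} (hκ : 0 ≤ κ)
    (hq : ∀ v : Γ ⧸ N, Real.sqrt (qE N μ (exch v (v * QuotientGroup.mk σ))) ≤ κ) :
    Emeas N μ (fun η =>
        |etabarQ N Fi 1 η - etabarQ N Fi (QuotientGroup.mk σ) η|)
      ≤ Real.sqrt (3 / (Fi.card : ℝ) + κ) := by
  have hn' : (0:ℝ) < (Fi.card : ℝ) := by exact_mod_cast hn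
  -- the local summands
  set d : Γ → Conf N → ℝ := fun τ η =>
    (if η (QuotientGroup.mk τ) then (1:ℝ) else 0)
      - (if η (QuotientGroup.mk τ * QuotientGroup.mk σ) then (1:ℝ) else 0) with hd
  have hg : ∀ η : Conf N, etabarQ N Fi 1 η - etabarQ N Fi (QuotientGroup.mk σ) η
      = ((Fi.card : ℝ))⁻¹ * ∑ τ ∈ Fi, d τ η := by
    intro η
    unfold etabarQ
    rw [← mul_sub, ← Finset.sum_sub_distrib]
    congr 1
    refine Finset.sum_congr rfl fun τ _ => ?_
    rw [hd]
    simp [mul_one]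
  have hdabs : ∀ τ η, |d τ η| ≤ 1 := by
    intro τ η
    rw [hd]
    dsimp only
    split_ifs <;> norm_num
  have hddabs : ∀ τ τ' η, |d τ η * d τ' η| ≤ 1 := by
    intro τ τ' η
    rw [abs_mul]
    calc |d τ η| * |d τ' η| ≤ 1 * 1 :=
          mul_le_mul (hdabs τ η) (hdabs τ' η) (abs_nonneg _) zero_le_one
      _ = 1 := one_mul 1
  set Pf : Γ × Γ → ℝ := fun p => ∑ η : Conf N, μ η * (d p.1 η * d p.2 η) with hPf
  have hP1 : ∀ p : Γ × Γ, |Pf p| ≤ 1 := by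
    intro p
    rw [hPf]
    calc |∑ η : Conf N, μ η * (d p.1 η * d p.2 η)|
        ≤ ∑ η : Conf N, |μ η * (d p.1 η * d p.2 η)| := Finset.abs_sum_le_sum_abs _ _
      _ ≤ ∑ η : Conf N, μ η := by
          refine Finset.sum_le_sum fun η _ => ?_
          rw [abs_mul, abs_of_nonneg (hprob.1 η)]
          calc μ η * |d p.1 η * d p.2 η| ≤ μ η * 1 :=
                mul_le_mul_of_nonneg_left (hddabs _ _ η) (hprob.1 η)
            _ = μ η := mul_one _
      _ = 1 := hprob.2
  -- good pairs decorrelate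
  have hPgood : ∀ τ τ' : Γ,
      (QuotientGroup.mk τ : Γ ⧸ N) ≠ QuotientGroup.mk τ' →
      (QuotientGroup.mk τ : Γ ⧸ N) ≠ QuotientGroup.mk τ' * QuotientGroup.mk σ →
      (QuotientGroup.mk τ : Γ ⧸ N) * QuotientGroup.mk σ ≠ QuotientGroup.mk τ' →
      (QuotientGroup.mk τ : Γ ⧸ N) * QuotientGroup.mk σ
        ≠ QuotientGroup.mk τ' * QuotientGroup.mk σ →
      |Pf (τ, τ')| ≤ κ := by
    intro τ τ' h1 h2 h3 h4
    by_cases hid : (QuotientGroup.mk τ' : Γ ⧸ N) = QuotientGroup.mk τ' * QuotientGroup.mk σ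
    · have hz : ∀ η : Conf N, d τ' η = 0 := by
        intro η
        rw [hd]
        dsimp only
        rw [← hid, sub_self]
      have : Pf (τ, τ') = 0 := by
        rw [hPf]
        refine Finset.sum_eq_zero fun η _ => ?_
        dsimp only
        rw [hz η, mul_zero, mul_zero]
      rw [this, abs_zero]
      exact hκ
    · set T : Conf N → Conf N :=
        exch (QuotientGroup.mk τ' : Γ ⧸ N)
          (QuotientGroup.mk τ' * QuotientGroup.mk σ) with hTdef
      have hT : Function.Bijective T := exch_bijective _ _
      have hTT : ∀ η, T (T η) = η := fun η => exch_exch _ _ η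
      have e3 : ∀ η : Conf N, T η (QuotientGroup.mk τ')
          = η (QuotientGroup.mk τ' * QuotientGroup.mk σ) := by
        intro η; rw [hTdef]; simp [exch]
      have e4 : ∀ η : Conf N, T η (QuotientGroup.mk τ' * QuotientGroup.mk σ)
          = η (QuotientGroup.mk τ') := by
        intro η; rw [hTdef]; simp [exch, Ne.symm hid]
      have e1 : ∀ η : Conf N, T η (QuotientGroup.mk τ) = η (QuotientGroup.mk τ) := by
        intro η; rw [hTdef]; simp [exch, h1, h2]
      have e2 : ∀ η : Conf N, T η (QuotientGroup.mk τ * QuotientGroup.mk σ)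
          = η (QuotientGroup.mk τ * QuotientGroup.mk σ) := by
        intro η; rw [hTdef]; simp [exch, h3, h4]
      have hPT : ∀ η : Conf N, d τ (T η) * d τ' (T η) = -(d τ η * d τ' η) := by
        intro η
        rw [hd]
        dsimp only
        rw [e1 η, e2 η, e3 η, e4 η]
        ring
      have hswap := emeas_comp_sub_le N μ hprob hT hTT
        (fun η => d τ η * d τ' η) (fun η => hddabs τ τ' η)
      have hneg : ∑ η : Conf N, μ η * (d τ (T η) * d τ' (T η))
          = - ∑ η : Conf N, μ η * (d τ η * d τ' η) := by
        rw [← Finset.sum_neg_distrib]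
        exact Finset.sum_congr rfl fun η _ => by rw [hPT η]; ring
      rw [hneg] at hswap
      have habs2 : |(- ∑ η : Conf N, μ η * (d τ η * d τ' η))
          - ∑ η : Conf N, μ η * (d τ η * d τ' η)|
          = 2 * |∑ η : Conf N, μ η * (d τ η * d τ' η)| := by
        rw [show (- ∑ η : Conf N, μ η * (d τ η * d τ' η))
            - ∑ η : Conf N, μ η * (d τ η * d τ' η)
            = -(2 * ∑ η : Conf N, μ η * (d τ η * d τ' η)) by ring, abs_neg, abs_mul]
        norm_num
      rw [habs2] at hswap
      have hqT : Real.sqrt (qE N μ T) ≤ κ := hq (QuotientGroup.mk τ')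
      calc |Pf (τ, τ')| = |∑ η : Conf N, μ η * (d τ η * d τ' η)| := rfl
        _ ≤ Real.sqrt (qE N μ T) := by linarith
        _ ≤ κ := hqT
  -- expand the second moment
  have hEgsq : Emeas N μ (fun η =>
        (etabarQ N Fi 1 η - etabarQ N Fi (QuotientGroup.mk σ) η)^2)
      = ((Fi.card : ℝ))⁻¹^2 * ∑ p ∈ Fi ×ˢ Fi, Pf p := by
    unfold Emeas
    have hper : ∀ η : Conf N,
        μ η * (etabarQ N Fi 1 η - etabarQ N Fi (QuotientGroup.mk σ) η)^2
        = ∑ p ∈ Fi ×ˢ Fi, ((Fi.card : ℝ))⁻¹^2 * (μ η * (d p.1 η * d p.2 η)) := by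
      intro η
      rw [hg η]
      calc μ η * (((Fi.card : ℝ))⁻¹ * ∑ τ ∈ Fi, d τ η)^2
          = ((Fi.card : ℝ))⁻¹^2 *
            (μ η * ((∑ τ ∈ Fi, d τ η) * (∑ τ' ∈ Fi, d τ' η))) := by ring
        _ = ((Fi.card : ℝ))⁻¹^2 *
            (μ η * ∑ p ∈ Fi ×ˢ Fi, d p.1 η * d p.2 η) := by
              rw [Finset.sum_mul_sum, ← Finset.sum_product']
        _ = ∑ p ∈ Fi ×ˢ Fi, ((Fi.card : ℝ))⁻¹^2 * (μ η * (d p.1 η * d p.2 η)) := by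
              rw [Finset.mul_sum, Finset.mul_sum]
    calc ∑ η : Conf N, μ η * (fun η =>
          (etabarQ N Fi 1 η - etabarQ N Fi (QuotientGroup.mk σ) η)^2) η
        = ∑ η : Conf N, ∑ p ∈ Fi ×ˢ Fi,
            ((Fi.card : ℝ))⁻¹^2 * (μ η * (d p.1 η * d p.2 η)) := by
          exact Finset.sum_congr rfl fun η _ => hper η
      _ = ∑ p ∈ Fi ×ˢ Fi, ∑ η : Conf N,
            ((Fi.card : ℝ))⁻¹^2 * (μ η * (d p.1 η * d p.2 η)) := Finset.sum_comm
      _ = ((Fi.card : ℝ))⁻¹^2 * ∑ p ∈ Fi ×ˢ Fi, Pf p := by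
          rw [Finset.mul_sum]
          exact Finset.sum_congr rfl fun p _ => by rw [← Finset.mul_sum]
  -- split into bad and good pairs
  classical
  set badp : Γ × Γ → Prop := fun p => p.1 = p.2 ∨
    (QuotientGroup.mk p.1 : Γ ⧸ N) = QuotientGroup.mk p.2 * QuotientGroup.mk σ ∨
    (QuotientGroup.mk p.1 : Γ ⧸ N) * QuotientGroup.mk σ = QuotientGroup.mk p.2 with hbadp
  have hsplit := Finset.sum_filter_add_sum_filter_not (Fi ×ˢ Fi) badp Pf
  have hbadcard : ((Fi ×ˢ Fi).filter badp).card ≤ 3 * Fi.card := by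
    have hsub : (Fi ×ˢ Fi).filter badp ⊆
        ((Fi ×ˢ Fi).filter (fun p => p.1 = p.2)) ∪
        (((Fi ×ˢ Fi).filter (fun p =>
            (QuotientGroup.mk p.1 : Γ ⧸ N)
              = QuotientGroup.mk p.2 * QuotientGroup.mk σ)) ∪
          ((Fi ×ˢ Fi).filter (fun p =>
            (QuotientGroup.mk p.1 : Γ ⧸ N) * QuotientGroup.mk σ
              = QuotientGroup.mk p.2))) := by
      intro p hp
      rw [Finset.mem_filter] at hp
      rcases hp.2 with h | h | h
      · exact Finset.mem_union_left _ (Finset.mem_filter.mpr ⟨hp.1, h⟩)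
      · exact Finset.mem_union_right _
          (Finset.mem_union_left _ (Finset.mem_filter.mpr ⟨hp.1, h⟩))
      · exact Finset.mem_union_right _
          (Finset.mem_union_right _ (Finset.mem_filter.mpr ⟨hp.1, h⟩))
    have hc1 : ((Fi ×ˢ Fi).filter (fun p : Γ × Γ => p.1 = p.2)).card ≤ Fi.card := by
      apply Finset.card_le_card_of_injOn (fun p => p.1)
      · intro p hp
        rw [Finset.mem_coe, Finset.mem_filter, Finset.mem_product] at hp
        exact hp.1.1
      · intro p hp q hq hpq
        dsimp only at hpq
        simp only [Finset.mem_coe, Finset.mem_filter] at hp hq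
        have h2 : p.2 = q.2 := by rw [← hp.2, ← hq.2]; exact hpq
        exact Prod.ext hpq h2
    have hc2 : ((Fi ×ˢ Fi).filter (fun p : Γ × Γ =>
        (QuotientGroup.mk p.1 : Γ ⧸ N)
          = QuotientGroup.mk p.2 * QuotientGroup.mk σ)).card ≤ Fi.card := by
      apply Finset.card_le_card_of_injOn (fun p => p.2)
      · intro p hp
        rw [Finset.mem_coe, Finset.mem_filter, Finset.mem_product] at hp
        exact hp.1.2
      · intro p hp q hq hpq
        dsimp only at hpq
        simp only [Finset.mem_coe, Finset.mem_filter, Finset.mem_product] at hp hq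
        have hmk : (QuotientGroup.mk p.1 : Γ ⧸ N) = QuotientGroup.mk q.1 := by
          rw [hp.2, hq.2, hpq]
        have h1 : p.1 = q.1 := hinj hp.1.1 hq.1.1 hmk
        exact Prod.ext h1 hpq
    have hc3 : ((Fi ×ˢ Fi).filter (fun p : Γ × Γ =>
        (QuotientGroup.mk p.1 : Γ ⧸ N) * QuotientGroup.mk σ
          = QuotientGroup.mk p.2)).card ≤ Fi.card := by
      apply Finset.card_le_card_of_injOn (fun p => p.1)
      · intro p hp
        rw [Finset.mem_coe, Finset.mem_filter, Finset.mem_product] at hp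
        exact hp.1.1
      · intro p hp q hq hpq
        dsimp only at hpq
        simp only [Finset.mem_coe, Finset.mem_filter, Finset.mem_product] at hp hq
        have hmk : (QuotientGroup.mk p.2 : Γ ⧸ N) = QuotientGroup.mk q.2 := by
          rw [← hp.2, ← hq.2, hpq]
        have h2 : p.2 = q.2 := hinj hp.1.2 hq.1.2 hmk
        exact Prod.ext hpq h2
    calc ((Fi ×ˢ Fi).filter badp).card
        ≤ (((Fi ×ˢ Fi).filter (fun p => p.1 = p.2)) ∪
          (((Fi ×ˢ Fi).filter (fun p =>
              (QuotientGroup.mk p.1 : Γ ⧸ N)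
                = QuotientGroup.mk p.2 * QuotientGroup.mk σ)) ∪
            ((Fi ×ˢ Fi).filter (fun p =>
              (QuotientGroup.mk p.1 : Γ ⧸ N) * QuotientGroup.mk σ
                = QuotientGroup.mk p.2)))).card := Finset.card_le_card hsub
      _ ≤ _ := by
          refine le_trans (Finset.card_union_le _ _) ?_
          have := Finset.card_union_le
            ((Fi ×ˢ Fi).filter (fun p : Γ × Γ =>
              (QuotientGroup.mk p.1 : Γ ⧸ N)
                = QuotientGroup.mk p.2 * QuotientGroup.mk σ))
            ((Fi ×ˢ Fi).filter (fun p : Γ × Γ =>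
              (QuotientGroup.mk p.1 : Γ ⧸ N) * QuotientGroup.mk σ
                = QuotientGroup.mk p.2))
          omega
  have hbadsum : ∑ p ∈ (Fi ×ˢ Fi).filter badp, Pf p ≤ 3 * (Fi.card : ℝ) := by
    calc ∑ p ∈ (Fi ×ˢ Fi).filter badp, Pf p
        ≤ ∑ _p ∈ (Fi ×ˢ Fi).filter badp, (1:ℝ) :=
          Finset.sum_le_sum fun p _ => le_trans (le_abs_self _) (hP1 p)
      _ = (((Fi ×ˢ Fi).filter badp).card : ℝ) := by simp
      _ ≤ 3 * (Fi.card : ℝ) := by exact_mod_cast hbadcard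
  have hgoodsum : ∑ p ∈ (Fi ×ˢ Fi).filter (fun p => ¬ badp p), Pf p
      ≤ (Fi.card : ℝ)^2 * κ := by
    have hterm : ∀ p ∈ (Fi ×ˢ Fi).filter (fun p => ¬ badp p), Pf p ≤ κ := by
      intro p hp
      rw [Finset.mem_filter, Finset.mem_product] at hp
      obtain ⟨⟨hp1, hp2⟩, hnb⟩ := hp
      rw [hbadp] at hnb
      dsimp only at hnb
      push_neg at hnb
      obtain ⟨hne, hb2, hb3⟩ := hnb
      have h1 : (QuotientGroup.mk p.1 : Γ ⧸ N) ≠ QuotientGroup.mk p.2 := by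
        intro h
        exact (hne (hinj hp1 hp2 h)).elim
      have h4 : (QuotientGroup.mk p.1 : Γ ⧸ N) * QuotientGroup.mk σ
          ≠ QuotientGroup.mk p.2 * QuotientGroup.mk σ := by
        intro h
        exact h1 (mul_right_cancel h)
      exact le_trans (le_abs_self _) (hPgood p.1 p.2 h1 hb2 hb3 h4)
    calc ∑ p ∈ (Fi ×ˢ Fi).filter (fun p => ¬ badp p), Pf p
        ≤ ∑ _p ∈ (Fi ×ˢ Fi).filter (fun p => ¬ badp p), κ :=
          Finset.sum_le_sum hterm
      _ = (((Fi ×ˢ Fi).filter (fun p => ¬ badp p)).card : ℝ) * κ := by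
          rw [Finset.sum_const, nsmul_eq_mul]
      _ ≤ (Fi.card : ℝ)^2 * κ := by
          refine mul_le_mul_of_nonneg_right ?_ hκ
          have h1 : ((Fi ×ˢ Fi).filter (fun p => ¬ badp p)).card ≤ (Fi ×ˢ Fi).card :=
            Finset.card_filter_le _ _
          have h2 : (Fi ×ˢ Fi).card = Fi.card * Fi.card := Finset.card_product _ _
          have : ((Fi ×ˢ Fi).filter (fun p => ¬ badp p)).card ≤ Fi.card * Fi.card := by omega
          calc (((Fi ×ˢ Fi).filter (fun p => ¬ badp p)).card : ℝ)
              ≤ ((Fi.card * Fi.card : ℕ) : ℝ) := by exact_mod_cast this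
            _ = (Fi.card : ℝ)^2 := by push_cast; ring
  have htotal : ∑ p ∈ Fi ×ˢ Fi, Pf p ≤ 3 * (Fi.card : ℝ) + (Fi.card : ℝ)^2 * κ := by
    rw [← hsplit]
    linarith
  have hEbound : Emeas N μ (fun η =>
        (etabarQ N Fi 1 η - etabarQ N Fi (QuotientGroup.mk σ) η)^2)
      ≤ 3 / (Fi.card : ℝ) + κ := by
    rw [hEgsq]
    have hfact : ((Fi.card : ℝ))⁻¹^2 * (3 * (Fi.card : ℝ) + (Fi.card : ℝ)^2 * κ)
        = 3 / (Fi.card : ℝ) + κ := by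
      field_simp
    calc ((Fi.card : ℝ))⁻¹^2 * ∑ p ∈ Fi ×ˢ Fi, Pf p
        ≤ ((Fi.card : ℝ))⁻¹^2 * (3 * (Fi.card : ℝ) + (Fi.card : ℝ)^2 * κ) :=
          mul_le_mul_of_nonneg_left htotal (by positivity)
      _ = 3 / (Fi.card : ℝ) + κ := hfact
  calc Emeas N μ (fun η =>
        |etabarQ N Fi 1 η - etabarQ N Fi (QuotientGroup.mk σ) η|)
      ≤ Real.sqrt (Emeas N μ (fun η =>
          (etabarQ N Fi 1 η - etabarQ N Fi (QuotientGroup.mk σ) η)^2)) :=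
        emeas_abs_le_sqrt N μ hprob _
    _ ≤ Real.sqrt (3 / (Fi.card : ℝ) + κ) := Real.sqrt_le_sqrt hEbound

end S8
section S9
variable {Γ : Type} [Group Γ] [DecidableEq Γ] {S : Finset Γ}

lemma mem_ballF_one {s : Γ} (hs : s ∈ S) : s ∈ ballF S 1 := by
  have : (1:Γ) * s ∈ ballF S 0 * S := Finset.mul_mem_mul (by simp [ballF]) hs
  simpa [ballF] using Finset.mem_union_right (ballF S 0) this

variable (N : Subgroup Γ) [N.Normal]

lemma cQ_symm_exch [DecidableEq (Γ ⧸ N)] (c : JumpRate S)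
    (hS_symm : ∀ s ∈ S, s⁻¹ ∈ S)
    (hN : ∀ γ ∈ ballF S (c.r + 1), γ ∈ N → γ = 1) :
    ∀ (v : Γ ⧸ N) (s : Gen S) (η : Conf N),
      cQ N c v s (exchQ N v (s : Γ) η) = cQ N c v s η := by
  intro v s η
  have hmkx : QuotientGroup.mk (Quotient.out v) = v := QuotientGroup.out_eq' v
  set x : Γ := Quotient.out v with hxdef
  have hmkxs : (QuotientGroup.mk (x * (s:Γ)) : Γ ⧸ N) = v * QuotientGroup.mk (s:Γ) := by
    rw [QuotientGroup.mk_mul, hmkx]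
  have hagree : ∀ z ∈ (ballF S c.r).image (x * ·) ∪ (ballF S c.r).image (x * (s:Γ) * ·),
      liftZ N (exchQ N v (s:Γ) η) z = exch x (x * (s:Γ)) (liftZ N η) z := by
    intro z hz
    have hzform : (∃ b ∈ ballF S c.r, x * b = z) ∨ (∃ b ∈ ballF S c.r, x * (s:Γ) * b = z) := by
      rcases Finset.mem_union.mp hz with h | h
      · left; simpa using Finset.mem_image.mp h
      · right; simpa using Finset.mem_image.mp h
    by_cases hz1 : z = x
    · subst hz1
      have lhs : liftZ N (exchQ N v (s:Γ) η) x = η (v * QuotientGroup.mk (s:Γ)) := by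
        show exchQ N v (s:Γ) η (QuotientGroup.mk x) = _
        simp only [exchQ, exch]
        rw [if_pos hmkx]
      have rhs : exch x (x * (s:Γ)) (liftZ N η) x = η (v * QuotientGroup.mk (s:Γ)) := by
        simp [exch, liftZ, hmkxs]
      rw [lhs, rhs]
    · by_cases hz2 : z = x * (s:Γ)
      · subst hz2
        have hcond : ¬ ((QuotientGroup.mk (x * (s:Γ)) : Γ ⧸ N) = v) := by
          rw [hmkxs]
          intro h
          have hs1 : (QuotientGroup.mk (s:Γ) : Γ ⧸ N) = 1 :=
            mul_left_cancel (a := v) (show v * _ = v * 1 by rw [mul_one]; exact h)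
          have hsN : (s:Γ) ∈ N := (QuotientGroup.eq_one_iff _).mp hs1
          have hs1' : (s:Γ) = 1 :=
            hN (s:Γ) (ballF_mono S (by omega) (mem_ballF_one s.2)) hsN
          exact hz1 (by rw [hs1', mul_one])
        have lhs : liftZ N (exchQ N v (s:Γ) η) (x * (s:Γ)) = η v := by
          show exchQ N v (s:Γ) η (QuotientGroup.mk (x * (s:Γ))) = _
          simp only [exchQ, exch]
          rw [if_neg hcond, if_pos hmkxs]
        have rhs : exch x (x * (s:Γ)) (liftZ N η) (x * (s:Γ)) = η v := by
          simp [exch, hz1, liftZ, hmkx]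
        rw [lhs, rhs]
      · have hne1 : ¬ ((QuotientGroup.mk z : Γ ⧸ N) = v) := by
          intro h
          have hγ : x⁻¹ * z ∈ N := QuotientGroup.eq.mp (hmkx.trans h.symm)
          rcases hzform with ⟨b, hb, hbz⟩ | ⟨b, hb, hbz⟩
          · have he : x⁻¹ * z = b := by rw [← hbz]; group
            rw [he] at hγ
            have hb1 : b = 1 := hN b (ballF_mono S (by omega) hb) hγ
            exact hz1 (by rw [← hbz, hb1, mul_one])
          · have he : x⁻¹ * z = (s:Γ) * b := by rw [← hbz]; group
            rw [he] at hγ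
            have hb1 : (s:Γ) * b = 1 := hN _ (smul_mem_ballF s.2 hb) hγ
            exact hz1 (by rw [← hbz, mul_assoc, hb1, mul_one])
        have hne2 : ¬ ((QuotientGroup.mk z : Γ ⧸ N) = v * QuotientGroup.mk (s:Γ)) := by
          intro h
          have hγ : (x * (s:Γ))⁻¹ * z ∈ N := QuotientGroup.eq.mp (hmkxs.trans h.symm)
          rcases hzform with ⟨b, hb, hbz⟩ | ⟨b, hb, hbz⟩
          · have he : (x * (s:Γ))⁻¹ * z = (s:Γ)⁻¹ * b := by rw [← hbz]; group
            rw [he] at hγ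
            have hb1 : (s:Γ)⁻¹ * b = 1 :=
              hN _ (smul_mem_ballF (hS_symm (s:Γ) s.2) hb) hγ
            have hbs : (s:Γ) = b := inv_mul_eq_one.mp hb1
            exact hz2 (by rw [← hbz, ← hbs])
          · have he : (x * (s:Γ))⁻¹ * z = b := by rw [← hbz]; group
            rw [he] at hγ
            have hb1 : b = 1 := hN b (ballF_mono S (by omega) hb) hγ
            exact hz2 (by rw [← hbz, hb1, mul_one])
        have lhs : liftZ N (exchQ N v (s:Γ) η) z = η (QuotientGroup.mk z) := by
          show exchQ N v (s:Γ) η (QuotientGroup.mk z) = _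
          simp only [exchQ, exch]
          rw [if_neg hne1, if_neg hne2]
        have rhs : exch x (x * (s:Γ)) (liftZ N η) z = η (QuotientGroup.mk z) := by
          simp only [exch]
          rw [if_neg hz1, if_neg hz2]
          rfl
        rw [lhs, rhs]
  have h1 : c.c x s (liftZ N (exchQ N v (s:Γ) η))
      = c.c x s (exch x (x * (s:Γ)) (liftZ N η)) :=
    c.localized x s _ _ hagree
  calc cQ N c v s (exchQ N v (s:Γ) η)
      = c.c x s (liftZ N (exchQ N v (s:Γ) η)) := rfl
    _ = c.c x s (exch x (x * (s:Γ)) (liftZ N η)) := h1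
    _ = c.c x s (liftZ N η) := c.symm_exch x s (liftZ N η)
    _ = cQ N c v s η := rfl

end S9
section S10
variable {Γ : Type} [Group Γ] [DecidableEq Γ] {S : Finset Γ}

lemma eventually_trivial_inter (Γs : ℕ → Subgroup Γ) (hdesc : ∀ m, Γs (m + 1) ≤ Γs m)
    (hsep : ∀ x : Γ, (∀ m, x ∈ Γs m) → x = 1) (A : Finset Γ) :
    ∀ᶠ m in Filter.atTop, ∀ x ∈ A, x ∈ Γs m → x = 1 := by
  have hanti : ∀ {m m' : ℕ}, m ≤ m' → Γs m' ≤ Γs m := by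
    intro m m' h
    induction h with
    | refl => exact le_rfl
    | step h ih => exact le_trans (hdesc _) ih
  rw [Filter.eventually_all_finset]
  intro x hx
  by_cases hx1 : x = 1
  · filter_upwards with m
    intro _; exact hx1
  · obtain ⟨m0, hm0⟩ : ∃ m0, x ∉ Γs m0 := by
      by_contra h
      push_neg at h
      exact hx1 (hsep x h)
    filter_upwards [Filter.eventually_ge_atTop m0] with m hm hxm
    exact absurd (hanti hm hxm) hm0

lemma folner_mul_ball_subset {F : Finset Γ} (hFS : F * S ⊆ F) :
    ∀ (n : ℕ) (x : Γ), x ∈ ballF S n → ∀ τ ∈ F, τ * x ∈ F := by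
  intro n
  induction n with
  | zero =>
    intro x hx τ hτ
    simp only [ballF, Finset.mem_singleton] at hx
    subst hx; simpa using hτ
  | succ n ih =>
    intro x hx τ hτ
    rcases Finset.mem_union.mp hx with h | h
    · exact ih x h τ hτ
    · rcases Finset.mem_mul.mp h with ⟨y, hy, u, hu, rfl⟩
      have h1 : τ * y ∈ F := ih y hy τ hτ
      have h2 : (τ * y) * u ∈ F * S := Finset.mul_mem_mul h1 hu
      have := hFS h2
      rwa [mul_assoc] at this

lemma folner_card_atTop [Infinite Γ] (hS_symm : ∀ s ∈ S, s⁻¹ ∈ S)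
    (hS_gen : Subgroup.closure (S : Set Γ) = ⊤)
    {F : ℕ → Finset Γ} (hF : IsFolner S F) :
    Filter.Tendsto (fun i => ((F i).card : ℝ)) Filter.atTop Filter.atTop := by
  have hdiff : ∀ i, ((F i * S) \ F i).Nonempty := by
    intro i
    rw [Finset.sdiff_nonempty]
    intro hsub
    obtain ⟨τ, hτ⟩ := hF.1 i
    have hall : ∀ γ : Γ, γ ∈ F i := by
      intro γ
      obtain ⟨n, hn⟩ := exists_mem_ballF hS_symm hS_gen (τ⁻¹ * γ)
      have := folner_mul_ball_subset hsub n (τ⁻¹ * γ) hn τ hτ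
      rwa [mul_inv_cancel_left] at this
    have hfin : (Set.univ : Set Γ).Finite :=
      Set.Finite.subset (F i).finite_toSet (fun γ _ => hall γ)
    exact Set.infinite_univ hfin
  rw [Filter.tendsto_atTop]
  intro K
  set K' : ℝ := max K 1 with hK'
  have hK'pos : (0:ℝ) < K' := lt_of_lt_of_le one_pos (le_max_right _ _)
  have hev : ∀ᶠ i in Filter.atTop,
      (((F i * S) \ F i).card : ℝ) / ((F i).card : ℝ) < K'⁻¹ :=
    hF.2.eventually_lt_const (by positivity)
  filter_upwards [hev] with i hi
  have hcard : (0:ℝ) < ((F i).card : ℝ) := by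
    exact_mod_cast (hF.1 i).card_pos
  have hone : (1:ℝ) ≤ (((F i * S) \ F i).card : ℝ) := by
    exact_mod_cast (hdiff i).card_pos
  have hlow : ((F i).card : ℝ)⁻¹ ≤ (((F i * S) \ F i).card : ℝ) / ((F i).card : ℝ) := by
    rw [inv_eq_one_div]
    gcongr
  have : ((F i).card : ℝ)⁻¹ < K'⁻¹ := lt_of_le_of_lt hlow hi
  have hgt : K' < ((F i).card : ℝ) := by
    rwa [inv_lt_inv₀ hcard hK'pos] at this
  exact le_of_lt (lt_of_le_of_lt (le_max_left K 1) hgt)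

end S10
section S11
variable {Γ : Type} [Group Γ] [DecidableEq Γ] {S : Finset Γ}
variable (N : Subgroup Γ) [N.Normal] [Fintype (Γ ⧸ N)] [DecidableEq (Γ ⧸ N)]

lemma etabarQ_mem_Icc (Fi : Finset Γ) (hn : 0 < Fi.card) (v : Γ ⧸ N) (η : Conf N) :
    0 ≤ etabarQ N Fi v η ∧ etabarQ N Fi v η ≤ 1 := by
  have hn' : (0:ℝ) < (Fi.card : ℝ) := by exact_mod_cast hn
  unfold etabarQ
  constructor
  · refine mul_nonneg (inv_nonneg.mpr hn'.le) (Finset.sum_nonneg fun σ _ => ?_)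
    split_ifs <;> norm_num
  · have hsum : ∑ σ ∈ Fi, (if η (QuotientGroup.mk σ * v) then (1:ℝ) else 0)
        ≤ (Fi.card : ℝ) := by
      calc ∑ σ ∈ Fi, (if η (QuotientGroup.mk σ * v) then (1:ℝ) else 0)
          ≤ ∑ _σ ∈ Fi, (1:ℝ) := Finset.sum_le_sum fun σ _ => by split_ifs <;> norm_num
        _ = (Fi.card : ℝ) := by simp
    calc ((Fi.card : ℝ))⁻¹ * ∑ σ ∈ Fi, (if η (QuotientGroup.mk σ * v) then (1:ℝ) else 0)
        ≤ ((Fi.card : ℝ))⁻¹ * (Fi.card : ℝ) :=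
          mul_le_mul_of_nonneg_left hsum (inv_nonneg.mpr hn'.le)
      _ = 1 := inv_mul_cancel₀ hn'.ne'

lemma emeas_abs_etabar_mem_Icc (Fi : Finset Γ) (hn : 0 < Fi.card)
    (μ : Conf N → ℝ) (hprob : IsProb N μ) (w : Γ ⧸ N) :
    0 ≤ Emeas N μ (fun η => |etabarQ N Fi 1 η - etabarQ N Fi w η|) ∧
      Emeas N μ (fun η => |etabarQ N Fi 1 η - etabarQ N Fi w η|) ≤ 1 := by
  constructor
  · exact Finset.sum_nonneg fun η _ => mul_nonneg (hprob.1 η) (abs_nonneg _)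
  · calc Emeas N μ (fun η => |etabarQ N Fi 1 η - etabarQ N Fi w η|)
        ≤ ∑ η : Conf N, μ η := by
          refine Finset.sum_le_sum fun η _ => ?_
          have h1 := etabarQ_mem_Icc N Fi hn 1 η
          have h2 := etabarQ_mem_Icc N Fi hn w η
          have habs : |etabarQ N Fi 1 η - etabarQ N Fi w η| ≤ 1 :=
            abs_le.mpr ⟨by linarith [h1.1, h2.2], by linarith [h1.2, h2.1]⟩
          calc μ η * |etabarQ N Fi 1 η - etabarQ N Fi w η| ≤ μ η * 1 :=
                mul_le_mul_of_nonneg_left habs (hprob.1 η)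
            _ = μ η := mul_one _
      _ = 1 := hprob.2

end S11
/-- **Theorem 3.3 (the two-blocks estimate).**
For every jump rate `c` and every `C > 0`,
`lim_{i→∞} limsup_{ε→0} limsup_{L→∞} limsup_{m→∞}
  sup_{σ ∈ Γ, L < |σ|_Γ ≤ ε√t_m} sup_{μ ∈ P_{m,C}} E_μ |η̄_{o,i} - η̄_{σ̄o,i}| = 0`. -/
theorem two_blocks_estimate
    {Γ : Type} [Group Γ] [DecidableEq Γ] [Infinite Γ]
    (S : Finset Γ) (hS_symm : ∀ s ∈ S, s⁻¹ ∈ S)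
    (hS_gen : Subgroup.closure (S : Set Γ) = ⊤)
    (Γs : ℕ → Subgroup Γ) [∀ m, (Γs m).Normal] [∀ m, (Γs m).FiniteIndex]
    [∀ m, Fintype (Γ ⧸ Γs m)] [∀ m, DecidableEq (Γ ⧸ Γs m)]
    (hdesc : ∀ m, Γs (m + 1) ≤ Γs m)
    (hsep : ∀ x : Γ, (∀ m, x ∈ Γs m) → x = 1)
    (t : ℕ → ℝ) (ht_pos : ∀ m, 0 < t m) (ht_mono : StrictMono t)
    (ht_top : Tendsto t atTop atTop)
    (ht_diam : ∀ m, Real.sqrt (t m) ≤ 2 * (diamQ (Γs m) S : ℝ))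
    (F : ℕ → Finset Γ) (hF : IsFolner S F)
    (c : JumpRate S) (C : ℝ) (hC : 0 < C) :
    Tendsto (fun i : ℕ =>
        limsup (fun ε : ℝ =>
            limsup (fun L : ℕ =>
                limsup (fun m : ℕ =>
                    sSup {x : ℝ | ∃ σ : Γ, ∃ μ : Conf (Γs m) → ℝ,
                      (L < wordNorm S σ ∧ (wordNorm S σ : ℝ) ≤ ε * Real.sqrt (t m)) ∧
                        (IsProb (Γs m) μ ∧ IsInvariant (Γs m) μ ∧
                          ImGen (Γs m) c μ ≤ C * ((Γs m).index : ℝ) / t m) ∧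
                        x = Emeas (Γs m) μ (fun η =>
                          |etabarQ (Γs m) (F i) 1 η -
                            etabarQ (Γs m) (F i) (QuotientGroup.mk σ) η|)})
                  atTop)
              atTop)
          (nhdsWithin 0 (Set.Ioi 0)))
      atTop (nhds 0) := by
  classical
  obtain ⟨hFne, hFrat⟩ := hF
  set K₁ : ℝ := 2 * Real.sqrt (2 * C / c.c₀) with hK₁def
  have hK₁0 : (0:ℝ) ≤ K₁ := by positivity
  -- bounds of the inner `sSup` in `[0,1]`
  have hs01 : ∀ (i : ℕ) (ε : ℝ) (L m : ℕ),
      0 ≤ sSup {x : ℝ | ∃ σ : Γ, ∃ μ : Conf (Γs m) → ℝ,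
          (L < wordNorm S σ ∧ (wordNorm S σ : ℝ) ≤ ε * Real.sqrt (t m)) ∧
            (IsProb (Γs m) μ ∧ IsInvariant (Γs m) μ ∧
              ImGen (Γs m) c μ ≤ C * ((Γs m).index : ℝ) / t m) ∧
            x = Emeas (Γs m) μ (fun η =>
              |etabarQ (Γs m) (F i) 1 η -
                etabarQ (Γs m) (F i) (QuotientGroup.mk σ) η|)} ∧
        sSup {x : ℝ | ∃ σ : Γ, ∃ μ : Conf (Γs m) → ℝ,
          (L < wordNorm S σ ∧ (wordNorm S σ : ℝ) ≤ ε * Real.sqrt (t m)) ∧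
            (IsProb (Γs m) μ ∧ IsInvariant (Γs m) μ ∧
              ImGen (Γs m) c μ ≤ C * ((Γs m).index : ℝ) / t m) ∧
            x = Emeas (Γs m) μ (fun η =>
              |etabarQ (Γs m) (F i) 1 η -
                etabarQ (Γs m) (F i) (QuotientGroup.mk σ) η|)} ≤ 1 := by
    intro i ε L m
    constructor
    · refine Real.sSup_nonneg ?_
      rintro x ⟨σ, μ, -, ⟨hprob, -, -⟩, rfl⟩
      exact (emeas_abs_etabar_mem_Icc (Γs m) (F i) (hFne i).card_pos μ hprob _).1
    · refine Real.sSup_le ?_ zero_le_one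
      rintro x ⟨σ, μ, -, ⟨hprob, -, -⟩, rfl⟩
      exact (emeas_abs_etabar_mem_Icc (Γs m) (F i) (hFne i).card_pos μ hprob _).2
  -- the core quantitative estimate, eventually in m
  have hcore : ∀ (i : ℕ) (ε : ℝ) (L : ℕ), ∀ᶠ m in atTop,
      sSup {x : ℝ | ∃ σ : Γ, ∃ μ : Conf (Γs m) → ℝ,
          (L < wordNorm S σ ∧ (wordNorm S σ : ℝ) ≤ ε * Real.sqrt (t m)) ∧
            (IsProb (Γs m) μ ∧ IsInvariant (Γs m) μ ∧
              ImGen (Γs m) c μ ≤ C * ((Γs m).index : ℝ) / t m) ∧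
            x = Emeas (Γs m) μ (fun η =>
              |etabarQ (Γs m) (F i) 1 η -
                etabarQ (Γs m) (F i) (QuotientGroup.mk σ) η|)}
        ≤ Real.sqrt (3 / ((F i).card : ℝ) + K₁ * ε) := by
    intro i ε L
    have hev1 := eventually_trivial_inter Γs hdesc hsep (ballF S (c.r + 1))
    have hev2 := eventually_trivial_inter Γs hdesc hsep ((F i)⁻¹ * F i)
    filter_upwards [hev1, hev2] with m hm1 hm2
    refine Real.sSup_le ?_ (Real.sqrt_nonneg _)
    rintro x ⟨σ, μ, ⟨hL, hle⟩, ⟨hprob, hinv, hIm⟩, rfl⟩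
    have htm : (0:ℝ) < t m := ht_pos m
    have hstm : (0:ℝ) < Real.sqrt (t m) := Real.sqrt_pos.mpr htm
    have hwn1 : (1:ℝ) ≤ (wordNorm S σ : ℝ) := by
      have : 1 ≤ wordNorm S σ := by omega
      exact_mod_cast this
    have hε0 : (0:ℝ) ≤ ε := by nlinarith
    have hinj : Set.InjOn (fun τ : Γ => (QuotientGroup.mk τ : Γ ⧸ Γs m))
        ((F i : Finset Γ) : Set Γ) := by
      intro τ hτ τ' hτ' h
      dsimp only at h
      have hmem : τ⁻¹ * τ' ∈ (F i)⁻¹ * F i :=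
        Finset.mul_mem_mul (Finset.inv_mem_inv hτ) hτ'
      have hNm : τ⁻¹ * τ' ∈ Γs m := QuotientGroup.eq.mp h
      exact inv_mul_eq_one.mp (hm2 _ hmem hNm)
    have hsymm := cQ_symm_exch (Γs m) c hS_symm hm1
    have hcardQ : (0:ℝ) < (Fintype.card (Γ ⧸ Γs m) : ℝ) := by
      exact_mod_cast Fintype.card_pos
    have hidx : ((Γs m).index : ℝ) = (Fintype.card (Γ ⧸ Γs m) : ℝ) := by
      norm_cast
      rw [Subgroup.index_eq_card, Nat.card_eq_fintype_card]
    have hc₀ := c.c₀_pos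
    have hqE : ∀ (v : Γ ⧸ Γs m) (s : Gen S),
        qE (Γs m) μ (exchQ (Γs m) v (s : Γ)) ≤ 2 * C / (c.c₀ * t m) := by
      intro v s
      have h1 : Ds (Γs m) c μ v s
          ≤ 2 * (C * ((Γs m).index : ℝ) / t m) / (Fintype.card (Γ ⧸ Γs m) : ℝ) :=
        Ds_le_of_ImGen (Γs m) c μ hinv hsymm hIm v s
      have h2 : 2 * (C * ((Γs m).index : ℝ) / t m) / (Fintype.card (Γ ⧸ Γs m) : ℝ)
          = 2 * C / t m := by
        rw [hidx]
        field_simp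
      have h3 : c.c₀ * qE (Γs m) μ (exchQ (Γs m) v (s : Γ)) ≤ 2 * C / t m := by
        calc c.c₀ * qE (Γs m) μ (exchQ (Γs m) v (s : Γ)) ≤ Ds (Γs m) c μ v s :=
              qE_le_Ds (Γs m) c μ v s
          _ ≤ 2 * C / t m := h2 ▸ h1
      have h4 : qE (Γs m) μ (exchQ (Γs m) v (s : Γ)) ≤ (2 * C / t m) / c.c₀ :=
        (le_div_iff₀ hc₀).mpr (by linarith)
      calc qE (Γs m) μ (exchQ (Γs m) v (s : Γ)) ≤ (2 * C / t m) / c.c₀ := h4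
        _ = 2 * C / (c.c₀ * t m) := by rw [div_div]; ring
    set β : ℝ := Real.sqrt (2 * C / (c.c₀ * t m)) with hβdef
    have hβ0 : (0:ℝ) ≤ β := Real.sqrt_nonneg _
    have hβsq : β^2 = 2 * C / (c.c₀ * t m) := Real.sq_sqrt (by positivity)
    have hedge : ∀ (v : Γ ⧸ Γs m) (s : Γ), s ∈ S →
        qE (Γs m) μ (exch v (v * QuotientGroup.mk s)) ≤ β^2 := by
      intro v s hs
      rw [hβsq]
      have := hqE v ⟨s, hs⟩
      rwa [exchQ_eq_exch] at this
    have hmv := sqrt_qE_exch_le (Γs m) μ hβ0 hedge (wordNorm S σ) σ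
      (mem_ballF_wordNorm hS_symm hS_gen σ)
    have hsb : Real.sqrt (t m) * β = Real.sqrt (2 * C / c.c₀) := by
      rw [hβdef, ← Real.sqrt_mul htm.le]
      congr 1
      field_simp
    have hq : ∀ v : Γ ⧸ Γs m,
        Real.sqrt (qE (Γs m) μ (exch v (v * QuotientGroup.mk σ))) ≤ K₁ * ε := by
      intro v
      calc Real.sqrt (qE (Γs m) μ (exch v (v * QuotientGroup.mk σ)))
          ≤ 2 * (wordNorm S σ : ℝ) * β := hmv v
        _ ≤ 2 * (ε * Real.sqrt (t m)) * β := by nlinarith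
        _ = K₁ * ε := by rw [hK₁def, ← hsb]; ring
    exact main_estimate (Γs m) μ hprob (F i) (hFne i).card_pos hinj σ
      (mul_nonneg hK₁0 hε0) hq
  -- assemble the iterated limsups
  have hδ0 : ∀ (i : ℕ) (ε : ℝ), 0 ≤ Real.sqrt (3 / ((F i).card : ℝ) + K₁ * ε) :=
    fun i ε => Real.sqrt_nonneg _
  have hA01 : ∀ (i : ℕ) (ε : ℝ) (L : ℕ),
      0 ≤ limsup (fun m : ℕ =>
          sSup {x : ℝ | ∃ σ : Γ, ∃ μ : Conf (Γs m) → ℝ,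
            (L < wordNorm S σ ∧ (wordNorm S σ : ℝ) ≤ ε * Real.sqrt (t m)) ∧
              (IsProb (Γs m) μ ∧ IsInvariant (Γs m) μ ∧
                ImGen (Γs m) c μ ≤ C * ((Γs m).index : ℝ) / t m) ∧
              x = Emeas (Γs m) μ (fun η =>
                |etabarQ (Γs m) (F i) 1 η -
                  etabarQ (Γs m) (F i) (QuotientGroup.mk σ) η|)}) atTop ∧
        limsup (fun m : ℕ =>
          sSup {x : ℝ | ∃ σ : Γ, ∃ μ : Conf (Γs m) → ℝ,
            (L < wordNorm S σ ∧ (wordNorm S σ : ℝ) ≤ ε * Real.sqrt (t m)) ∧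
              (IsProb (Γs m) μ ∧ IsInvariant (Γs m) μ ∧
                ImGen (Γs m) c μ ≤ C * ((Γs m).index : ℝ) / t m) ∧
              x = Emeas (Γs m) μ (fun η =>
                |etabarQ (Γs m) (F i) 1 η -
                  etabarQ (Γs m) (F i) (QuotientGroup.mk σ) η|)}) atTop ≤ 1 :=
    fun i ε L =>
      ⟨real_le_limsup (Filter.Eventually.of_forall fun m => (hs01 i ε L m).2)
          (Filter.Eventually.of_forall fun m => (hs01 i ε L m).1),
        real_limsup_le (Filter.Eventually.of_forall fun m => (hs01 i ε L m).1)
          (Filter.Eventually.of_forall fun m => (hs01 i ε L m).2)⟩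
  have hA_le : ∀ (i : ℕ) (ε : ℝ) (L : ℕ),
      limsup (fun m : ℕ =>
          sSup {x : ℝ | ∃ σ : Γ, ∃ μ : Conf (Γs m) → ℝ,
            (L < wordNorm S σ ∧ (wordNorm S σ : ℝ) ≤ ε * Real.sqrt (t m)) ∧
              (IsProb (Γs m) μ ∧ IsInvariant (Γs m) μ ∧
                ImGen (Γs m) c μ ≤ C * ((Γs m).index : ℝ) / t m) ∧
              x = Emeas (Γs m) μ (fun η =>
                |etabarQ (Γs m) (F i) 1 η -
                  etabarQ (Γs m) (F i) (QuotientGroup.mk σ) η|)}) atTop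
        ≤ Real.sqrt (3 / ((F i).card : ℝ) + K₁ * ε) :=
    fun i ε L =>
      real_limsup_le (Filter.Eventually.of_forall fun m => (hs01 i ε L m).1)
        (hcore i ε L)
  -- limsup over L
  have hB01 : ∀ (i : ℕ) (ε : ℝ),
      0 ≤ limsup (fun L : ℕ =>
          limsup (fun m : ℕ =>
            sSup {x : ℝ | ∃ σ : Γ, ∃ μ : Conf (Γs m) → ℝ,
              (L < wordNorm S σ ∧ (wordNorm S σ : ℝ) ≤ ε * Real.sqrt (t m)) ∧
                (IsProb (Γs m) μ ∧ IsInvariant (Γs m) μ ∧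
                  ImGen (Γs m) c μ ≤ C * ((Γs m).index : ℝ) / t m) ∧
                x = Emeas (Γs m) μ (fun η =>
                  |etabarQ (Γs m) (F i) 1 η -
                    etabarQ (Γs m) (F i) (QuotientGroup.mk σ) η|)}) atTop) atTop ∧
        limsup (fun L : ℕ =>
          limsup (fun m : ℕ =>
            sSup {x : ℝ | ∃ σ : Γ, ∃ μ : Conf (Γs m) → ℝ,
              (L < wordNorm S σ ∧ (wordNorm S σ : ℝ) ≤ ε * Real.sqrt (t m)) ∧
                (IsProb (Γs m) μ ∧ IsInvariant (Γs m) μ ∧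
                  ImGen (Γs m) c μ ≤ C * ((Γs m).index : ℝ) / t m) ∧
                x = Emeas (Γs m) μ (fun η =>
                  |etabarQ (Γs m) (F i) 1 η -
                    etabarQ (Γs m) (F i) (QuotientGroup.mk σ) η|)}) atTop) atTop
          ≤ Real.sqrt (3 / ((F i).card : ℝ) + K₁ * ε) :=
    fun i ε =>
      ⟨real_le_limsup (Filter.Eventually.of_forall fun L => (hA01 i ε L).2)
          (Filter.Eventually.of_forall fun L => (hA01 i ε L).1),
        real_limsup_le (Filter.Eventually.of_forall fun L => (hA01 i ε L).1)
          (Filter.Eventually.of_forall fun L => hA_le i ε L)⟩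
  have hB1 : ∀ (i : ℕ) (ε : ℝ),
      limsup (fun L : ℕ =>
          limsup (fun m : ℕ =>
            sSup {x : ℝ | ∃ σ : Γ, ∃ μ : Conf (Γs m) → ℝ,
              (L < wordNorm S σ ∧ (wordNorm S σ : ℝ) ≤ ε * Real.sqrt (t m)) ∧
                (IsProb (Γs m) μ ∧ IsInvariant (Γs m) μ ∧
                  ImGen (Γs m) c μ ≤ C * ((Γs m).index : ℝ) / t m) ∧
                x = Emeas (Γs m) μ (fun η =>
                  |etabarQ (Γs m) (F i) 1 η -
                    etabarQ (Γs m) (F i) (QuotientGroup.mk σ) η|)}) atTop) atTop ≤ 1 :=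
    fun i ε =>
      real_limsup_le (Filter.Eventually.of_forall fun L => (hA01 i ε L).1)
        (Filter.Eventually.of_forall fun L => (hA01 i ε L).2)
  -- squeeze in i
  have hncard := folner_card_atTop hS_symm hS_gen ⟨hFne, hFrat⟩
  have hdiv : Tendsto (fun i => 3 / ((F i).card : ℝ)) atTop (nhds 0) :=
    Tendsto.div_atTop tendsto_const_nhds hncard
  have hsqrt0 : Tendsto (fun i => Real.sqrt (3 / ((F i).card : ℝ))) atTop (nhds 0) := by
    have := hdiv.sqrt
    rwa [Real.sqrt_zero] at this
  refine squeeze_zero (fun i => ?_) (fun i => ?_) hsqrt0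
  · -- nonnegativity of the ε-limsup
    exact real_le_limsup (Filter.Eventually.of_forall fun ε => hB1 i ε)
      (Filter.Eventually.of_forall fun ε => (hB01 i ε).1)
  · -- upper bound by √(3/|F i|)
    have hGle : ∀ ε₀ : ℝ, 0 < ε₀ →
        limsup (fun ε : ℝ =>
            limsup (fun L : ℕ =>
              limsup (fun m : ℕ =>
                sSup {x : ℝ | ∃ σ : Γ, ∃ μ : Conf (Γs m) → ℝ,
                  (L < wordNorm S σ ∧ (wordNorm S σ : ℝ) ≤ ε * Real.sqrt (t m)) ∧
                    (IsProb (Γs m) μ ∧ IsInvariant (Γs m) μ ∧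
                      ImGen (Γs m) c μ ≤ C * ((Γs m).index : ℝ) / t m) ∧
                    x = Emeas (Γs m) μ (fun η =>
                      |etabarQ (Γs m) (F i) 1 η -
                        etabarQ (Γs m) (F i) (QuotientGroup.mk σ) η|)}) atTop) atTop)
          (nhdsWithin 0 (Set.Ioi 0))
        ≤ Real.sqrt (3 / ((F i).card : ℝ) + K₁ * ε₀) := by
      intro ε₀ hε₀
      refine real_limsup_le (Filter.Eventually.of_forall fun ε => (hB01 i ε).1) ?_
      have hIoo : Set.Ioo (0:ℝ) ε₀ ∈ nhdsWithin (0:ℝ) (Set.Ioi 0) :=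
        Ioo_mem_nhdsGT_of_mem ⟨le_refl 0, hε₀⟩
      filter_upwards [hIoo] with ε hε
      refine le_trans ((hB01 i ε).2) (Real.sqrt_le_sqrt ?_)
      have : K₁ * ε ≤ K₁ * ε₀ := mul_le_mul_of_nonneg_left hε.2.le hK₁0
      linarith
    have htend : Tendsto (fun ε₀ : ℝ => Real.sqrt (3 / ((F i).card : ℝ) + K₁ * ε₀))
        (nhdsWithin 0 (Set.Ioi 0)) (nhds (Real.sqrt (3 / ((F i).card : ℝ)))) := by
      have hcont : Continuous fun x : ℝ => Real.sqrt (3 / ((F i).card : ℝ) + K₁ * x) := by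
        fun_prop
      have h0 := (hcont.tendsto 0).mono_left
        (nhdsWithin_le_nhds (a := (0:ℝ)) (s := Set.Ioi (0:ℝ)))
      simpa using h0
    refine ge_of_tendsto htend ?_
    filter_upwards [self_mem_nhdsWithin] with ε₀ hε₀
    exact hGle ε₀ hε₀

end Tower
end

section
/- (Uniform weak law of large numbers over Følner averages) Let f: V×Z → ℝ be a Γ-invariant local function bundle and (F_i) a sequence of nonempty finite subsets of Γ with |F_i| → ∞. Then lim_{i→∞} sup_{ρ ∈ [0,1]} E_{ν_ρ} | f̄_{o,i} − ⟨f_o⟩(ρ) | = 0, where f̄_{o,i} := (1/|F_i|) Σ_{σ∈F_i} f_{σo} and ⟨f_o⟩(ρ) := E_{ν_ρ}[f_o]. -/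
open Filter Pointwise

namespace Tower

variable {Γ : Type} [Group Γ] [DecidableEq Γ]

section Helpers

lemma bw_nonneg {ρ : ℝ} (h : ρ ∈ Set.Icc (0:ℝ) 1) (b : Bool) : 0 ≤ bw ρ b := by
  cases b <;> simp [bw] <;> [linarith [h.2]; exact h.1]

noncomputable def EB (ρ : ℝ) {ι : Type} [Fintype ι] [DecidableEq ι] (g : (ι → Bool) → ℝ) : ℝ :=
  ∑ ζ : ι → Bool, (∏ i, bw ρ (ζ i)) * g ζ

lemma sum_w (ρ : ℝ) {ι : Type} [Fintype ι] [DecidableEq ι] :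
    ∑ ζ : ι → Bool, ∏ i, bw ρ (ζ i) = 1 := by
  classical
  rw [← Fintype.piFinset_univ, Finset.sum_prod_piFinset]
  simp [bw]

def emb (A : Finset Γ) (ζ : {a // a ∈ A} → Bool) : Γ → Bool :=
  fun z => if h : z ∈ A then ζ ⟨z, h⟩ else false

lemma expCyl_eq (ρ : ℝ) (A : Finset Γ) (g : (Γ → Bool) → ℝ) :
    expCyl ρ A g = EB ρ (fun ζ => g (emb A ζ)) := rfl

lemma EB_reindex (ρ : ℝ) {ι κ : Type} [Fintype ι] [DecidableEq ι] [Fintype κ] [DecidableEq κ]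
    (e : ι ≃ κ) (g : (κ → Bool) → ℝ) :
    EB ρ g = EB ρ (fun ξ : ι → Bool => g (fun k => ξ (e.symm k))) := by
  unfold EB
  refine (Fintype.sum_equiv (Equiv.arrowCongr e (Equiv.refl Bool)) _ _ ?_).symm
  intro ξ
  have h1 : ∏ i, bw ρ (ξ i) = ∏ k, bw ρ (ξ (e.symm k)) :=
    Fintype.prod_equiv e _ _ (fun i => by simp)
  simp [Equiv.arrowCongr, ← h1]
  exact Or.inl rfl

lemma EB_mul (ρ : ℝ) {ι κ : Type} [Fintype ι] [DecidableEq ι] [Fintype κ] [DecidableEq κ]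
    (g : (ι → Bool) → ℝ) (h : (κ → Bool) → ℝ) :
    EB ρ (fun ζ : ι ⊕ κ → Bool => g (fun i => ζ (.inl i)) * h (fun k => ζ (.inr k)))
      = EB ρ g * EB ρ h := by
  unfold EB
  rw [Finset.sum_mul_sum, ← Fintype.sum_prod_type']
  refine Fintype.sum_equiv (Equiv.sumArrowEquivProdArrow ι κ Bool) _ _ ?_
  intro ζ
  simp [Equiv.sumArrowEquivProdArrow, Fintype.prod_sum_type]
  show _ = _ * g (fun i => ζ (Sum.inl i)) * (_ * h (fun k => ζ (Sum.inr k))); ring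

lemma EB_const (ρ : ℝ) {ι : Type} [Fintype ι] [DecidableEq ι] (c : ℝ) :
    EB ρ (fun _ : ι → Bool => c) = c := by
  unfold EB
  rw [← Finset.sum_mul, sum_w, one_mul]


def splitEquiv (B C : Finset Γ) (hd : Disjoint B C) :
    ({a // a ∈ B} ⊕ {a // a ∈ C}) ≃ {a // a ∈ B ∪ C} where
  toFun := Sum.elim (fun b => ⟨b, Finset.mem_union_left _ b.2⟩)
    (fun c => ⟨c, Finset.mem_union_right _ c.2⟩)
  invFun a := if h : (a : Γ) ∈ B then .inl ⟨a, h⟩ else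
    .inr ⟨a, (Finset.mem_union.mp a.2).resolve_left h⟩
  left_inv x := by
    rcases x with b | c
    · simp
    · have hcb : (c : Γ) ∉ B := fun h => (Finset.disjoint_left.mp hd h) c.2
      simp [hcb]
  right_inv a := by by_cases h : (a : Γ) ∈ B <;> simp [h]

lemma splitEquiv_symm_left {B C : Finset Γ} (hd : Disjoint B C) {z : Γ} (hz : z ∈ B)
    (hzu : z ∈ B ∪ C) : (splitEquiv B C hd).symm ⟨z, hzu⟩ = .inl ⟨z, hz⟩ := by
  simp [splitEquiv, hz]

lemma splitEquiv_symm_right {B C : Finset Γ} (hd : Disjoint B C) {z : Γ} (hz : z ∈ C)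
    (hzu : z ∈ B ∪ C) : (splitEquiv B C hd).symm ⟨z, hzu⟩ = .inr ⟨z, hz⟩ := by
  have hzb : z ∉ B := fun h => (Finset.disjoint_left.mp hd h) hz
  simp [splitEquiv, hzb]

lemma expCyl_union_mul (ρ : ℝ) (B C : Finset Γ) (hd : Disjoint B C)
    (g h : (Γ → Bool) → ℝ)
    (hg : ∀ η η', (∀ z ∈ B, η z = η' z) → g η = g η')
    (hh : ∀ η η', (∀ z ∈ C, η z = η' z) → h η = h η') :
    expCyl ρ (B ∪ C) (fun η => g η * h η) = expCyl ρ B g * expCyl ρ C h := by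
  rw [expCyl_eq, expCyl_eq ρ B, expCyl_eq ρ C, EB_reindex ρ (splitEquiv B C hd), ← EB_mul]
  apply Finset.sum_congr rfl
  intro ξ _
  congr 1
  have h1 : g (emb (B ∪ C) fun k => ξ ((splitEquiv B C hd).symm k))
      = g (emb B fun b => ξ (.inl b)) := by
    apply hg
    intro z hz
    have hzu : z ∈ B ∪ C := Finset.mem_union_left _ hz
    simp [emb, hzu, hz, splitEquiv_symm_left hd hz]
  have h2 : h (emb (B ∪ C) fun k => ξ ((splitEquiv B C hd).symm k))
      = h (emb C fun c => ξ (.inr c)) := by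
    apply hh
    intro z hz
    have hzu : z ∈ B ∪ C := Finset.mem_union_right _ hz
    simp [emb, hzu, hz, splitEquiv_symm_right hd hz]
  simp only [h1, h2]

lemma expCyl_const (ρ : ℝ) (A : Finset Γ) (c : ℝ) :
    expCyl ρ A (fun _ => c) = c := by
  rw [expCyl_eq]; exact EB_const ρ c

lemma expCyl_union_left (ρ : ℝ) (B C : Finset Γ) (hd : Disjoint B C)
    (g : (Γ → Bool) → ℝ)
    (hg : ∀ η η', (∀ z ∈ B, η z = η' z) → g η = g η') :
    expCyl ρ (B ∪ C) g = expCyl ρ B g := by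
  have := expCyl_union_mul ρ B C hd g (fun _ => 1) hg (fun _ _ _ => rfl)
  simpa [expCyl_const] using this

lemma expCyl_subset (ρ : ℝ) {A B : Finset Γ} (hBA : B ⊆ A) (g : (Γ → Bool) → ℝ)
    (hg : ∀ η η', (∀ z ∈ B, η z = η' z) → g η = g η') :
    expCyl ρ A g = expCyl ρ B g := by
  have h1 : B ∪ (A \ B) = A := Finset.union_sdiff_of_subset hBA
  conv_lhs => rw [← h1]
  exact expCyl_union_left ρ _ _ Finset.disjoint_sdiff g hg

lemma expCyl_mul_disjoint (ρ : ℝ) {A B C : Finset Γ} (hB : B ⊆ A) (hC : C ⊆ A)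
    (hd : Disjoint B C) (g h : (Γ → Bool) → ℝ)
    (hg : ∀ η η', (∀ z ∈ B, η z = η' z) → g η = g η')
    (hh : ∀ η η', (∀ z ∈ C, η z = η' z) → h η = h η') :
    expCyl ρ A (fun η => g η * h η) = expCyl ρ B g * expCyl ρ C h := by
  rw [expCyl_subset ρ (Finset.union_subset hB hC) _ (fun η η' ha => by
    rw [hg η η' (fun z hz => ha z (Finset.mem_union_left _ hz)),
      hh η η' (fun z hz => ha z (Finset.mem_union_right _ hz))])]
  exact expCyl_union_mul ρ B C hd g h hg hh

def mulEquiv' (σ : Γ) (B : Finset Γ) : {a // a ∈ B} ≃ {a // a ∈ B.image (σ * ·)} where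
  toFun b := ⟨σ * b, Finset.mem_image_of_mem _ b.2⟩
  invFun a := ⟨σ⁻¹ * a, by
    obtain ⟨b, hb, hba⟩ := Finset.mem_image.mp a.2
    rw [← hba]; simpa using hb⟩
  left_inv b := by simp
  right_inv a := by simp

lemma expCyl_translate (ρ : ℝ) (σ : Γ) (B : Finset Γ) (g : (Γ → Bool) → ℝ)
    (hg : ∀ η η', (∀ z ∈ B, η z = η' z) → g η = g η') :
    expCyl ρ (B.image (σ * ·)) (fun η => g (fun z => η (σ * z))) = expCyl ρ B g := by
  rw [expCyl_eq, expCyl_eq, EB_reindex ρ (mulEquiv' σ B)]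
  apply Finset.sum_congr rfl
  intro ξ _
  congr 1
  apply hg
  intro z hz
  have hzi : σ * z ∈ B.image (σ * ·) := Finset.mem_image_of_mem _ hz
  simp [emb, hzi, hz, mulEquiv']


lemma w_nonneg {ρ : ℝ} (hρ : ρ ∈ Set.Icc (0:ℝ) 1) {ι : Type} [Fintype ι]
    (ζ : ι → Bool) : 0 ≤ ∏ i, bw ρ (ζ i) :=
  Finset.prod_nonneg fun i _ => bw_nonneg hρ _

lemma expCyl_mono {ρ : ℝ} (hρ : ρ ∈ Set.Icc (0:ℝ) 1) (A : Finset Γ)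
    (g h : (Γ → Bool) → ℝ) (hle : ∀ η, g η ≤ h η) :
    expCyl ρ A g ≤ expCyl ρ A h :=
  Finset.sum_le_sum fun ζ _ => mul_le_mul_of_nonneg_left (hle _) (w_nonneg hρ ζ)

lemma expCyl_nonneg {ρ : ℝ} (hρ : ρ ∈ Set.Icc (0:ℝ) 1) (A : Finset Γ)
    (g : (Γ → Bool) → ℝ) (hgpos : ∀ η, 0 ≤ g η) : 0 ≤ expCyl ρ A g := by
  have := expCyl_mono hρ A (fun _ => 0) g (fun η => hgpos η)
  simpa [expCyl_const] using this

lemma abs_expCyl_le {ρ : ℝ} (hρ : ρ ∈ Set.Icc (0:ℝ) 1) {A : Finset Γ}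
    {g : (Γ → Bool) → ℝ} {M : ℝ} (hM : ∀ η, |g η| ≤ M) : |expCyl ρ A g| ≤ M := by
  rw [abs_le]
  constructor
  · have := expCyl_mono hρ A (fun _ => -M) g (fun η => neg_le_of_abs_le (hM η))
    simpa [expCyl_const] using this
  · have := expCyl_mono hρ A g (fun _ => M) (fun η => le_of_abs_le (hM η))
    simpa [expCyl_const] using this

lemma expCyl_abs_sq_le {ρ : ℝ} (hρ : ρ ∈ Set.Icc (0:ℝ) 1) (A : Finset Γ)
    (g : (Γ → Bool) → ℝ) :
    (expCyl ρ A (fun η => |g η|)) ^ 2 ≤ expCyl ρ A (fun η => g η ^ 2) := by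
  have key := Finset.sum_sq_le_sum_mul_sum_of_sq_eq_mul (Finset.univ : Finset ({a // a ∈ A} → Bool))
    (r := fun ζ => (∏ a, bw ρ (ζ a)) * |g (emb A ζ)|)
    (f := fun ζ => ∏ a, bw ρ (ζ a))
    (g := fun ζ => (∏ a, bw ρ (ζ a)) * (g (emb A ζ)) ^ 2)
    (fun ζ _ => w_nonneg hρ ζ)
    (fun ζ _ => mul_nonneg (w_nonneg hρ ζ) (sq_nonneg _))
    (fun ζ _ => by rw [mul_pow, sq_abs]; ring)
  calc (expCyl ρ A (fun η => |g η|)) ^ 2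
      ≤ (∑ ζ : {a // a ∈ A} → Bool, ∏ a, bw ρ (ζ a)) *
        ∑ ζ : {a // a ∈ A} → Bool, (∏ a, bw ρ (ζ a)) * (g (emb A ζ)) ^ 2 := key
    _ = expCyl ρ A (fun η => g η ^ 2) := by rw [sum_w, one_mul]; rfl

lemma expCyl_finsum {α : Type} (ρ : ℝ) (A : Finset Γ) (s : Finset α)
    (G : α → (Γ → Bool) → ℝ) :
    expCyl ρ A (fun η => ∑ x ∈ s, G x η) = ∑ x ∈ s, expCyl ρ A (G x) := by
  unfold expCyl
  simp_rw [Finset.mul_sum]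
  rw [Finset.sum_comm]

lemma expCyl_smul (ρ : ℝ) (A : Finset Γ) (c : ℝ) (g : (Γ → Bool) → ℝ) :
    expCyl ρ A (fun η => c * g η) = c * expCyl ρ A g := by
  unfold expCyl
  rw [Finset.mul_sum]
  exact Finset.sum_congr rfl fun ζ _ => by ring

lemma expCyl_sub_const (ρ : ℝ) (A : Finset Γ) (c : ℝ) (g : (Γ → Bool) → ℝ) :
    expCyl ρ A (fun η => g η - c) = expCyl ρ A g - c := by
  calc expCyl ρ A (fun η => g η - c)
      = expCyl ρ A g - expCyl ρ A (fun _ => c) := by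
        unfold expCyl
        rw [← Finset.sum_sub_distrib]
        exact Finset.sum_congr rfl fun ζ _ => by ring
    _ = expCyl ρ A g - c := by rw [expCyl_const]

end Helpers


section Main

variable {S : Finset Γ}

lemma ff_translate (f : LocalBundleV S) (σ : Γ) (η : Γ → Bool) :
    f.f σ η = f.f 1 (fun z => η (σ * z)) := by
  have h := f.invariant σ 1 (fun z => η (σ * z))
  simpa [mul_inv_cancel_left] using h

lemma ff_one_local (f : LocalBundleV S) (η η' : Γ → Bool)
    (h : ∀ z ∈ ballF S f.r, η z = η' z) : f.f 1 η = f.f 1 η' := by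
  apply f.localized 1
  intro z hz
  apply h
  simpa using hz

/-- A uniform bound on `|f.f x η|`. -/
noncomputable def Mf (S : Finset Γ) (f : LocalBundleV S) : ℝ :=
  Finset.univ.sup' Finset.univ_nonempty
    (fun ζ : {a // a ∈ ballF S f.r} → Bool => |f.f 1 (emb (ballF S f.r) ζ)|)

lemma ff_bound (f : LocalBundleV S) (σ : Γ) (η : Γ → Bool) : |f.f σ η| ≤ Mf S f := by
  rw [ff_translate f σ η]
  have h1 : f.f 1 (fun z => η (σ * z))
      = f.f 1 (emb (ballF S f.r) (fun a => η (σ * (a : Γ)))) := by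
    apply ff_one_local
    intro z hz
    simp [emb, hz]
  rw [h1]
  exact Finset.le_sup' (fun ζ : {a // a ∈ ballF S f.r} → Bool => |f.f 1 (emb (ballF S f.r) ζ)|)
    (Finset.mem_univ (fun a : {a // a ∈ ballF S f.r} => η (σ * (a : Γ))))

lemma Mf_nonneg (f : LocalBundleV S) : 0 ≤ Mf S f :=
  le_trans (abs_nonneg _) (ff_bound f 1 (fun _ => false))

lemma globalAvg_bound (f : LocalBundleV S) {ρ : ℝ} (hρ : ρ ∈ Set.Icc (0:ℝ) 1) :
    |globalAvg f ρ| ≤ Mf S f :=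
  abs_expCyl_le hρ (fun η => ff_bound f 1 η)

lemma expCyl_ff (f : LocalBundleV S) (ρ : ℝ) (σ : Γ) :
    expCyl ρ ((ballF S f.r).image (σ * ·)) (f.f σ) = globalAvg f ρ := by
  calc expCyl ρ ((ballF S f.r).image (σ * ·)) (f.f σ)
      = expCyl ρ ((ballF S f.r).image (σ * ·)) (fun η => f.f 1 (fun z => η (σ * z))) := by
        unfold expCyl
        exact Finset.sum_congr rfl fun ζ _ => by rw [ff_translate f σ]
    _ = expCyl ρ (ballF S f.r) (f.f 1) := expCyl_translate ρ σ _ _ (ff_one_local f)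
    _ = globalAvg f ρ := rfl

lemma sB_subset {Fi : Finset Γ} {σ : Γ} (hσ : σ ∈ Fi) (B : Finset Γ) :
    B.image (σ * ·) ⊆ Fi * B := by
  intro z hz
  obtain ⟨b, hb, rfl⟩ := Finset.mem_image.mp hz
  exact Finset.mul_mem_mul hσ hb

lemma ff_sub_local (f : LocalBundleV S) (σ : Γ) (m : ℝ) (η η' : Γ → Bool)
    (h : ∀ z ∈ (ballF S f.r).image (σ * ·), η z = η' z) :
    f.f σ η - m = f.f σ η' - m := by
  rw [f.localized σ η η' h]

/-- Vanishing of covariance for disjoint supports. -/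
lemma cov_zero (f : LocalBundleV S) {ρ : ℝ} {Fi : Finset Γ} {σ τ : Γ}
    (hσ : σ ∈ Fi) (hτ : τ ∈ Fi)
    (hd : Disjoint ((ballF S f.r).image (σ * ·)) ((ballF S f.r).image (τ * ·))) :
    expCyl ρ (Fi * ballF S f.r)
      (fun η => (f.f σ η - globalAvg f ρ) * (f.f τ η - globalAvg f ρ)) = 0 := by
  rw [expCyl_mul_disjoint ρ (sB_subset hσ _) (sB_subset hτ _) hd _ _
    (ff_sub_local f σ _) (ff_sub_local f τ _)]
  rw [expCyl_sub_const, expCyl_ff]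
  simp

/-- Uniform bound for covariance. -/
lemma cov_bound (f : LocalBundleV S) {ρ : ℝ} (hρ : ρ ∈ Set.Icc (0:ℝ) 1)
    {Fi : Finset Γ} (σ τ : Γ) :
    |expCyl ρ (Fi * ballF S f.r)
      (fun η => (f.f σ η - globalAvg f ρ) * (f.f τ η - globalAvg f ρ))|
      ≤ 4 * (Mf S f) ^ 2 := by
  apply abs_expCyl_le hρ
  intro η
  rw [abs_mul]
  have hb : ∀ x : Γ, |f.f x η - globalAvg f ρ| ≤ 2 * Mf S f := fun x =>
    (abs_sub _ _).trans (by
      have := ff_bound f x η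
      have := globalAvg_bound f hρ
      linarith)
  calc |f.f σ η - globalAvg f ρ| * |f.f τ η - globalAvg f ρ|
      ≤ (2 * Mf S f) * (2 * Mf S f) :=
        mul_le_mul (hb σ) (hb τ) (abs_nonneg _) (by linarith [Mf_nonneg f])
    _ = 4 * (Mf S f) ^ 2 := by ring

/-- The constant in the variance bound. -/
noncomputable def Cst (S : Finset Γ) (f : LocalBundleV S) : ℝ :=
  ((ballF S f.r * (ballF S f.r)⁻¹).card : ℝ) * (4 * (Mf S f) ^ 2)

lemma Cst_nonneg (f : LocalBundleV S) : 0 ≤ Cst S f :=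
  mul_nonneg (Nat.cast_nonneg _) (by positivity)

lemma not_disjoint_mem (B : Finset Γ) {σ τ : Γ}
    (h : ¬ Disjoint (B.image (σ * ·)) (B.image (τ * ·))) :
    τ ∈ (B * B⁻¹).image (σ * ·) := by
  obtain ⟨a, ha1, ha2⟩ := Finset.not_disjoint_iff.mp h
  obtain ⟨b, hb, rfl⟩ := Finset.mem_image.mp ha1
  obtain ⟨b', hb', he⟩ := Finset.mem_image.mp ha2
  have hτ : τ = σ * (b * b'⁻¹) := by
    rw [← mul_assoc]
    have he' : τ * b' = σ * b := he
    rw [← he', mul_inv_cancel_right]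
  rw [hτ]
  exact Finset.mem_image_of_mem _ (Finset.mul_mem_mul hb (Finset.inv_mem_inv hb'))

/-- The key quantitative bound, uniform in `ρ ∈ [0,1]`. -/
lemma key_bound (f : LocalBundleV S) (Fi : Finset Γ) (hne : Fi.Nonempty)
    {ρ : ℝ} (hρ : ρ ∈ Set.Icc (0:ℝ) 1) :
    expCyl ρ (Fi * ballF S f.r)
        (fun η => |((Fi.card : ℝ))⁻¹ * ∑ σ ∈ Fi, f.f σ η - globalAvg f ρ|)
      ≤ Real.sqrt (Cst S f / Fi.card) := by
  classical
  set B := ballF S f.r with hB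
  set A := Fi * B with hA
  set m := globalAvg f ρ with hm
  set M := Mf S f with hMdef
  have hcard0 : (Fi.card : ℝ) ≠ 0 := Nat.cast_ne_zero.mpr (Finset.card_ne_zero_of_mem hne.choose_spec)
  have hcardpos : (0:ℝ) < Fi.card := lt_of_le_of_ne (Nat.cast_nonneg _) (Ne.symm hcard0)
  -- rewrite the centered average
  have hGrw : ∀ η : Γ → Bool, ((Fi.card : ℝ))⁻¹ * ∑ σ ∈ Fi, f.f σ η - m
      = ((Fi.card : ℝ))⁻¹ * ∑ σ ∈ Fi, (f.f σ η - m) := by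
    intro η
    rw [Finset.sum_sub_distrib, mul_sub, Finset.sum_const, nsmul_eq_mul]
    field_simp
  -- covariance notation
  set cov : Γ → Γ → ℝ := fun σ τ => expCyl ρ A
    (fun η => (f.f σ η - m) * (f.f τ η - m)) with hcov
  -- second moment identity
  have hEsq : expCyl ρ A (fun η => (((Fi.card : ℝ))⁻¹ * ∑ σ ∈ Fi, f.f σ η - m) ^ 2)
      = (((Fi.card : ℝ))⁻¹) ^ 2 * ∑ σ ∈ Fi, ∑ τ ∈ Fi, cov σ τ := by
    have hfun : (fun η => (((Fi.card : ℝ))⁻¹ * ∑ σ ∈ Fi, f.f σ η - m) ^ 2)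
        = fun η => (((Fi.card : ℝ))⁻¹) ^ 2 *
            ∑ σ ∈ Fi, ∑ τ ∈ Fi, (f.f σ η - m) * (f.f τ η - m) := by
      funext η
      rw [hGrw η, mul_pow, sq (∑ σ ∈ Fi, (f.f σ η - m)), Finset.sum_mul_sum]
    rw [hfun, expCyl_smul, expCyl_finsum]
    congr 1
    exact Finset.sum_congr rfl fun σ _ => expCyl_finsum ρ A Fi _
  -- row bound
  have hrow : ∀ σ ∈ Fi, ∑ τ ∈ Fi, cov σ τ ≤ Cst S f := by
    intro σ hσ
    set Q := Fi.filter (fun τ => ¬ Disjoint (B.image (σ * ·)) (B.image (τ * ·))) with hQ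
    have hzero : ∀ τ ∈ Fi, τ ∉ Q → cov σ τ = 0 := by
      intro τ hτ hτQ
      have hd : Disjoint (B.image (σ * ·)) (B.image (τ * ·)) := by
        by_contra hc
        exact hτQ (Finset.mem_filter.mpr ⟨hτ, hc⟩)
      exact cov_zero f hσ hτ hd
    rw [← Finset.sum_subset (Finset.filter_subset _ _) hzero]
    have hQcard : (Q.card : ℝ) ≤ ((B * B⁻¹).card : ℝ) := by
      have hsub : Q ⊆ (B * B⁻¹).image (σ * ·) := by
        intro τ hτ
        exact not_disjoint_mem B (Finset.mem_filter.mp hτ).2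
      exact_mod_cast le_trans (Finset.card_le_card hsub) (Finset.card_image_le)
    calc ∑ τ ∈ Q, cov σ τ
        ≤ ∑ τ ∈ Q, (4 * M ^ 2) :=
          Finset.sum_le_sum fun τ _ => le_of_abs_le (cov_bound f hρ σ τ)
      _ = (Q.card : ℝ) * (4 * M ^ 2) := by rw [Finset.sum_const, nsmul_eq_mul]
      _ ≤ ((B * B⁻¹).card : ℝ) * (4 * M ^ 2) :=
          mul_le_mul_of_nonneg_right hQcard (by positivity)
      _ = Cst S f := rfl
  -- total variance bound
  have hvar : expCyl ρ A (fun η => (((Fi.card : ℝ))⁻¹ * ∑ σ ∈ Fi, f.f σ η - m) ^ 2)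
      ≤ Cst S f / Fi.card := by
    rw [hEsq]
    have hsum : ∑ σ ∈ Fi, ∑ τ ∈ Fi, cov σ τ ≤ (Fi.card : ℝ) * Cst S f := by
      calc ∑ σ ∈ Fi, ∑ τ ∈ Fi, cov σ τ
          ≤ ∑ _σ ∈ Fi, Cst S f := Finset.sum_le_sum hrow
        _ = (Fi.card : ℝ) * Cst S f := by rw [Finset.sum_const, nsmul_eq_mul]
    calc (((Fi.card : ℝ))⁻¹) ^ 2 * ∑ σ ∈ Fi, ∑ τ ∈ Fi, cov σ τ
        ≤ (((Fi.card : ℝ))⁻¹) ^ 2 * ((Fi.card : ℝ) * Cst S f) :=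
          mul_le_mul_of_nonneg_left hsum (by positivity)
      _ = Cst S f / Fi.card := by field_simp
  -- conclude via Cauchy-Schwarz
  have habs : 0 ≤ expCyl ρ A (fun η => |((Fi.card : ℝ))⁻¹ * ∑ σ ∈ Fi, f.f σ η - m|) :=
    expCyl_nonneg hρ A _ (fun η => abs_nonneg _)
  have hCS := expCyl_abs_sq_le hρ A (fun η => ((Fi.card : ℝ))⁻¹ * ∑ σ ∈ Fi, f.f σ η - m)
  calc expCyl ρ A (fun η => |((Fi.card : ℝ))⁻¹ * ∑ σ ∈ Fi, f.f σ η - m|)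
      = Real.sqrt ((expCyl ρ A (fun η => |((Fi.card : ℝ))⁻¹ * ∑ σ ∈ Fi, f.f σ η - m|)) ^ 2) :=
        (Real.sqrt_sq habs).symm
    _ ≤ Real.sqrt (Cst S f / Fi.card) :=
        Real.sqrt_le_sqrt (le_trans hCS hvar)

end Main

/-- **Uniform weak law of large numbers over Følner averages.** If `|F_i| → ∞`, then
`lim_{i→∞} sup_{ρ ∈ [0,1]} E_{ν_ρ} |f̄_{o,i} - ⟨f_o⟩(ρ)| = 0`. -/
theorem uniform_weak_lln {Γ : Type} [Group Γ] [DecidableEq Γ] [Infinite Γ]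
    (S : Finset Γ) (hS_symm : ∀ s ∈ S, s⁻¹ ∈ S)
    (hS_gen : Subgroup.closure (S : Set Γ) = ⊤)
    (f : LocalBundleV S) (F : ℕ → Finset Γ) (hne : ∀ i, (F i).Nonempty)
    (hcard : Tendsto (fun i => (F i).card) atTop atTop) :
    Tendsto (fun i : ℕ =>
        sSup ((fun ρ : ℝ =>
            expCyl ρ (F i * ballF S f.r)
              (fun η => |((F i).card : ℝ)⁻¹ * ∑ σ ∈ F i, f.f σ η - globalAvg f ρ|)) ''
          Set.Icc (0 : ℝ) 1))
      atTop (nhds 0) := by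
  classical
  set c : ℕ → ℝ := fun i => Real.sqrt (Cst S f / (F i).card) with hc
  have hub : ∀ i, ∀ x ∈ ((fun ρ : ℝ =>
      expCyl ρ (F i * ballF S f.r)
        (fun η => |((F i).card : ℝ)⁻¹ * ∑ σ ∈ F i, f.f σ η - globalAvg f ρ|)) ''
      Set.Icc (0 : ℝ) 1), x ≤ c i := by
    rintro i x ⟨ρ, hρ, rfl⟩
    exact key_bound f (F i) (hne i) hρ
  have hbdd : ∀ i, BddAbove ((fun ρ : ℝ =>
      expCyl ρ (F i * ballF S f.r)
        (fun η => |((F i).card : ℝ)⁻¹ * ∑ σ ∈ F i, f.f σ η - globalAvg f ρ|)) ''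
      Set.Icc (0 : ℝ) 1) := fun i => ⟨c i, fun x hx => hub i x hx⟩
  have hmem : ∀ i, expCyl (0:ℝ) (F i * ballF S f.r)
      (fun η => |((F i).card : ℝ)⁻¹ * ∑ σ ∈ F i, f.f σ η - globalAvg f 0|) ∈
      ((fun ρ : ℝ =>
        expCyl ρ (F i * ballF S f.r)
          (fun η => |((F i).card : ℝ)⁻¹ * ∑ σ ∈ F i, f.f σ η - globalAvg f ρ|)) ''
        Set.Icc (0 : ℝ) 1) := fun i => ⟨0, by norm_num, rfl⟩
  apply squeeze_zero (g := c)
  · intro i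
    refine le_trans ?_ (le_csSup (hbdd i) (hmem i))
    exact expCyl_nonneg (by norm_num) _ _ (fun η => abs_nonneg _)
  · intro i
    exact csSup_le ⟨_, hmem i⟩ (hub i)
  · have h1 : Tendsto (fun i => Cst S f / ((F i).card : ℝ)) atTop (nhds 0) :=
      Tendsto.div_atTop tendsto_const_nhds (tendsto_natCast_atTop_atTop.comp hcard)
    have h2 := (Real.continuous_sqrt.tendsto 0).comp h1
    rw [Real.sqrt_zero] at h2
    exact h2

end Tower
end
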